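/- arXiv:2007.00173 — 6 statements merged into one kernel-verified Lean document; each statement's English description precedes it below -/
import Mathlib

section
/- For every integer N ≥ 1, every r ≥ 1, all integers k₁,…,k_r ≥ 1 and all N-th roots of unity ε₁,…,ε_r ∈ ℂ with (k_r, ε_r) ≠ (1,1), the sequence of partial sums S_M = ∑_{0 < n₁ < ⋯ < n_r ≤ M} ε₁^{n₁}⋯ε_r^{n_r} / (n₁^{k₁}⋯n_r^{k_r}) converges in ℂ as M → ∞. -/
open Filter Topology

/-- Partial sum `∑_{0 < n₁ < ⋯ < n_r ≤ M} ε₁^{n₁}⋯ε_r^{n_r} / (n₁^{k₁}⋯n_r^{k_r})`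
of the series defining a cyclotomic multiple zeta value. -/
noncomputable def cmzvPartial (r : ℕ) (k : Fin r → ℕ) (ε : Fin r → ℂ) (M : ℕ) : ℂ :=
  ∑ n ∈ (Fintype.piFinset fun _ : Fin r => Finset.Icc 1 M).filter
      (fun n => ∀ i j : Fin r, i < j → n i < n j),
    ∏ i, ε i ^ n i / (n i : ℂ) ^ k i

open Finset

noncomputable def hsum (M : ℕ) : ℝ := ∑ m ∈ Finset.Icc 1 M, ((m : ℝ))⁻¹

lemma hsum_nonneg (M : ℕ) : 0 ≤ hsum M :=
  Finset.sum_nonneg fun _ _ => by positivity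

lemma hsum_mono : Monotone hsum := fun a b hab =>
  Finset.sum_le_sum_of_subset_of_nonneg (Finset.Icc_subset_Icc_right hab)
    (fun _ _ _ => by positivity)

lemma one_le_hsum {M : ℕ} (hM : 1 ≤ M) : 1 ≤ hsum M := by
  have : ((1:ℕ):ℝ)⁻¹ ≤ hsum M := Finset.single_le_sum (f := fun m : ℕ => ((m:ℝ))⁻¹)
    (fun _ _ => by positivity) (Finset.mem_Icc.2 ⟨le_refl 1, hM⟩)
  simpa using this

lemma hsum_le (M : ℕ) : hsum M ≤ 1 + Real.log M := by
  have h : hsum M = (harmonic M : ℝ) := by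
    rw [harmonic_eq_sum_Icc, hsum]
    push_cast
    rfl
  rw [h]
  exact_mod_cast harmonic_le_one_add_log M

lemma sum_inv_pow_le {K M : ℕ} (hK : 1 ≤ K) :
    ∑ m ∈ Finset.Icc 1 M, (((m : ℝ)) ^ K)⁻¹ ≤ hsum M := by
  refine Finset.sum_le_sum fun m hm => ?_
  simp only [Finset.mem_Icc] at hm
  have h1 : (1:ℝ) ≤ (m:ℝ) := by exact_mod_cast hm.1
  refine inv_anti₀ (by linarith) ?_
  calc (m:ℝ) = (m:ℝ)^1 := (pow_one _).symm
    _ ≤ (m:ℝ)^K := pow_le_pow_right₀ h1 hK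

lemma cmzvPartial_zero (k : Fin 0 → ℕ) (ε : Fin 0 → ℂ) (M : ℕ) :
    cmzvPartial 0 k ε M = 1 := by
  unfold cmzvPartial
  rw [Finset.filter_true_of_mem (fun x _ => fun i => i.elim0)]
  simp [Fintype.card_piFinset]

lemma cmzvPartial_succ (s : ℕ) (k : Fin (s+1) → ℕ) (ε : Fin (s+1) → ℂ) (M : ℕ) :
    cmzvPartial (s+1) k ε M
      = ∑ m ∈ Finset.Icc 1 M, (ε (Fin.last s) ^ m / (m : ℂ) ^ k (Fin.last s))
          * cmzvPartial s (fun i => k i.castSucc) (fun i => ε i.castSucc) (m - 1) := by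
  unfold cmzvPartial
  rw [← Finset.sum_fiberwise_of_maps_to (g := fun n => n (Fin.last s)) (t := Finset.Icc 1 M)
      (fun n hn => by
        simp only [Finset.mem_filter, Fintype.mem_piFinset] at hn
        exact hn.1 _)]
  refine Finset.sum_congr rfl fun m hm => ?_
  rw [Finset.mul_sum]
  simp only [Finset.mem_Icc] at hm
  refine Finset.sum_nbij' (i := fun n => fun i : Fin s => n i.castSucc)
    (j := fun t => Fin.snoc t m) ?_ ?_ ?_ ?_ ?_
  · intro a ha
    simp only [Finset.mem_filter, Fintype.mem_piFinset, Finset.mem_Icc] at ha ⊢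
    obtain ⟨⟨hpi, hmono⟩, hlast⟩ := ha
    refine ⟨fun i => ⟨(hpi i.castSucc).1, ?_⟩, fun i j hij => hmono _ _ (by exact_mod_cast hij)⟩
    have h1 : a i.castSucc < a (Fin.last s) := hmono _ _ (Fin.castSucc_lt_last i)
    omega
  · intro t ht
    simp only [Finset.mem_filter, Fintype.mem_piFinset, Finset.mem_Icc] at ht ⊢
    obtain ⟨hpi, hmono⟩ := ht
    refine ⟨⟨fun i => ?_, fun i j hij => ?_⟩, Fin.snoc_last _ _⟩
    · induction i using Fin.lastCases with
      | last => rw [Fin.snoc_last]; exact hm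
      | cast i => rw [Fin.snoc_castSucc]; exact ⟨(hpi i).1, le_trans (hpi i).2 (by omega)⟩
    · induction j using Fin.lastCases with
      | last =>
        induction i using Fin.lastCases with
        | last => exact absurd hij (lt_irrefl _)
        | cast i =>
          rw [Fin.snoc_last, Fin.snoc_castSucc]
          have := (hpi i).2; omega
      | cast j =>
        induction i using Fin.lastCases with
        | last => exact absurd (hij.trans (Fin.castSucc_lt_last j)) (lt_irrefl _)
        | cast i =>
          rw [Fin.snoc_castSucc, Fin.snoc_castSucc]
          exact hmono _ _ (by exact_mod_cast hij)
  · intro a ha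
    simp only [Finset.mem_filter] at ha
    funext j
    induction j using Fin.lastCases with
    | last => rw [Fin.snoc_last]; exact ha.2.symm
    | cast j => rw [Fin.snoc_castSucc]
  · intro t _
    funext i
    rw [Fin.snoc_castSucc]
  · intro a ha
    simp only [Finset.mem_filter] at ha
    rw [Fin.prod_univ_castSucc]
    rw [ha.2, mul_comm]

lemma norm_cmzvPartial_le (r : ℕ) (k : Fin r → ℕ) (ε : Fin r → ℂ)
    (hk : ∀ i, 1 ≤ k i) (hε : ∀ i, ‖ε i‖ = 1) (M : ℕ) :
    ‖cmzvPartial r k ε M‖ ≤ hsum M ^ r := by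
  refine (norm_sum_le _ _).trans ?_
  have hterm : ∀ n : Fin r → ℕ, ‖∏ i, ε i ^ n i / (n i : ℂ) ^ k i‖
      = ∏ i, (((n i : ℝ)) ^ k i)⁻¹ := by
    intro n
    rw [norm_prod]
    refine Finset.prod_congr rfl fun i _ => ?_
    rw [norm_div, norm_pow, norm_pow, hε i, one_pow, Complex.norm_natCast, one_div]
  calc ∑ n ∈ (Fintype.piFinset fun _ : Fin r => Finset.Icc 1 M).filter
        (fun n => ∀ i j : Fin r, i < j → n i < n j), ‖∏ i, ε i ^ n i / (n i : ℂ) ^ k i‖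
      = ∑ n ∈ (Fintype.piFinset fun _ : Fin r => Finset.Icc 1 M).filter
        (fun n => ∀ i j : Fin r, i < j → n i < n j), ∏ i, (((n i : ℝ)) ^ k i)⁻¹ :=
        Finset.sum_congr rfl fun n _ => hterm n
    _ ≤ ∑ n ∈ Fintype.piFinset fun _ : Fin r => Finset.Icc 1 M,
          ∏ i, (((n i : ℝ)) ^ k i)⁻¹ :=
        Finset.sum_le_sum_of_subset_of_nonneg (Finset.filter_subset _ _)
          (fun n _ _ => Finset.prod_nonneg fun i _ => by positivity)
    _ = ∏ i, ∑ m ∈ Finset.Icc 1 M, (((m : ℝ)) ^ k i)⁻¹ :=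
        (Finset.prod_univ_sum (fun _ : Fin r => Finset.Icc 1 M)
          (fun i m => (((m : ℝ)) ^ k i)⁻¹)).symm
    _ ≤ ∏ _i : Fin r, hsum M :=
        Finset.prod_le_prod (fun i _ => Finset.sum_nonneg fun m _ => by positivity)
          (fun i _ => sum_inv_pow_le (hk i))
    _ = hsum M ^ r := by rw [Finset.prod_const, Finset.card_univ, Fintype.card_fin]

lemma inv_pow_le_inv {m K : ℕ} (hm : 1 ≤ m) (hK : 1 ≤ K) :
    (((m : ℝ)) ^ K)⁻¹ ≤ ((m : ℝ))⁻¹ := by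
  have h1 : (1:ℝ) ≤ (m:ℝ) := by exact_mod_cast hm
  refine inv_anti₀ (by linarith) ?_
  calc (m:ℝ) = (m:ℝ)^1 := (pow_one _).symm
    _ ≤ (m:ℝ)^K := pow_le_pow_right₀ h1 hK

lemma norm_cmzvPartial_sub_le (s : ℕ) (k : Fin s → ℕ) (ε : Fin s → ℂ)
    (hk : ∀ i, 1 ≤ k i) (hε : ∀ i, ‖ε i‖ = 1) {n : ℕ} (hn : 1 ≤ n) :
    ‖cmzvPartial s k ε n - cmzvPartial s k ε (n-1)‖ ≤ hsum n ^ s / n := by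
  have hn1 : (1:ℝ) ≤ (n:ℝ) := by exact_mod_cast hn
  cases s with
  | zero =>
    rw [cmzvPartial_zero, cmzvPartial_zero, sub_self, norm_zero]
    positivity
  | succ s' =>
    obtain ⟨n', rfl⟩ : ∃ n', n = n' + 1 := ⟨n - 1, by omega⟩
    rw [cmzvPartial_succ, cmzvPartial_succ, Nat.add_sub_cancel,
      Finset.sum_Icc_succ_top (by omega), add_sub_cancel_left,
      norm_mul, norm_div, norm_pow, norm_pow, hε _, one_pow, Complex.norm_natCast]
    have hP : ‖cmzvPartial s' (fun i => k i.castSucc) (fun i => ε i.castSucc) (n' + 1 - 1)‖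
        ≤ hsum (n' + 1) ^ s' := by
      refine (norm_cmzvPartial_le _ _ _ (fun i => hk _) (fun i => hε _) _).trans ?_
      exact pow_le_pow_left₀ (hsum_nonneg _) (hsum_mono (by omega)) _
    have hpow : ((((n':ℕ) + 1 : ℕ) : ℝ) ^ k (Fin.last s'))⁻¹ ≤ (((n':ℕ) + 1 : ℕ) : ℝ)⁻¹ :=
      inv_pow_le_inv (by omega) (hk _)
    calc 1 / (((n' + 1 : ℕ)) : ℝ) ^ k (Fin.last s')
          * ‖cmzvPartial s' (fun i => k i.castSucc) (fun i => ε i.castSucc) (n' + 1 - 1)‖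
        ≤ (((n' + 1 : ℕ)) : ℝ)⁻¹ * hsum (n' + 1) ^ s' := by
          rw [one_div]
          exact mul_le_mul hpow hP (norm_nonneg _) (by positivity)
      _ ≤ (((n' + 1 : ℕ)) : ℝ)⁻¹ * hsum (n' + 1) ^ (s' + 1) := by
          refine mul_le_mul_of_nonneg_left ?_ (by positivity)
          exact pow_le_pow_right₀ (one_le_hsum (by omega)) (by omega)
      _ = hsum (n' + 1) ^ (s' + 1) / ((n' + 1 : ℕ) : ℝ) := by
          rw [inv_mul_eq_div]

lemma log_pow_le_sqrt (s : ℕ) : ∃ C : ℝ, 0 < C ∧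
    ∀ n : ℕ, 1 ≤ n → (1 + Real.log n) ^ s ≤ C * Real.sqrt n := by
  rcases Nat.eq_zero_or_pos s with rfl | hs
  · exact ⟨1, one_pos, fun n hn => by
      rw [pow_zero, one_mul]
      exact Real.one_le_sqrt.2 (by exact_mod_cast hn)⟩
  · refine ⟨(1 + 2 * s) ^ s, by positivity, fun n hn => ?_⟩
    have hn1 : (1:ℝ) ≤ (n:ℝ) := by exact_mod_cast hn
    set δ : ℝ := 1 / (2 * s) with hδ
    have hδ0 : 0 < δ := by positivity
    have hrp : (0:ℝ) < (n:ℝ) ^ δ := Real.rpow_pos_of_pos (by linarith) δ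
    have hrp1 : (1:ℝ) ≤ (n:ℝ) ^ δ := Real.one_le_rpow hn1 hδ0.le
    have hlog : Real.log n ≤ 2 * s * (n:ℝ) ^ δ := by
      have h1 : Real.log ((n:ℝ) ^ δ) = δ * Real.log n := Real.log_rpow (by linarith) δ
      have h2 : Real.log ((n:ℝ) ^ δ) ≤ (n:ℝ) ^ δ - 1 := Real.log_le_sub_one_of_pos hrp
      have hs' : (0:ℝ) < 2 * s := by positivity
      have : δ * Real.log n ≤ (n:ℝ) ^ δ := by rw [← h1]; linarith
      calc Real.log n = (2 * s) * (δ * Real.log n) := by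
            rw [hδ, ← mul_assoc, mul_one_div_cancel hs'.ne', one_mul]
        _ ≤ (2 * s) * ((n:ℝ) ^ δ) := by nlinarith [Real.log_natCast_nonneg n]
    have hbase : 1 + Real.log n ≤ (1 + 2 * s) * (n:ℝ) ^ δ := by nlinarith
    calc (1 + Real.log n) ^ s ≤ ((1 + 2 * s) * (n:ℝ) ^ δ) ^ s := by
          refine pow_le_pow_left₀ ?_ hbase s
          have := Real.log_natCast_nonneg n; linarith
      _ = (1 + 2 * s : ℝ) ^ s * ((n:ℝ) ^ δ) ^ s := mul_pow _ _ _
      _ = (1 + 2 * s : ℝ) ^ s * Real.sqrt n := by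
          rw [← Real.rpow_natCast ((n:ℝ) ^ δ) s, ← Real.rpow_mul (by linarith)]
          congr 1
          rw [Real.sqrt_eq_rpow]
          congr 1
          have hs0 : ((s:ℝ)) ≠ 0 := by positivity
          field_simp [hδ]
          rw [hδ]; field_simp

lemma summable_logpow_div_sq (s : ℕ) :
    Summable (fun n : ℕ => (1 + Real.log n) ^ s / ((n:ℝ)) ^ 2) := by
  obtain ⟨C, hC, hb⟩ := log_pow_le_sqrt s
  have hsum : Summable (fun n : ℕ => C * ((n:ℝ) ^ ((3:ℝ)/2))⁻¹) :=
    (Real.summable_nat_rpow_inv.2 (by norm_num)).mul_left C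
  refine hsum.of_nonneg_of_le (fun n => by positivity) (fun n => ?_)
  rcases Nat.eq_zero_or_pos n with rfl | hn
  · simp
  · have hn1 : (1:ℝ) ≤ (n:ℝ) := by exact_mod_cast hn
    have h1 : (1 + Real.log n) ^ s ≤ C * Real.sqrt n := hb n hn
    have hsqrt : Real.sqrt n = (n:ℝ) ^ ((1:ℝ)/2) := Real.sqrt_eq_rpow _
    have hne : ((n:ℝ)) ^ 2 ≠ 0 := by positivity
    rw [div_le_iff₀ (by positivity)]
    calc (1 + Real.log n) ^ s ≤ C * Real.sqrt n := h1
      _ = C * ((n:ℝ) ^ ((3:ℝ)/2))⁻¹ * (n:ℝ) ^ 2 := by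
          rw [hsqrt, mul_assoc]
          congr 1
          rw [show ((n:ℝ)) ^ 2 = (n:ℝ) ^ ((2:ℕ):ℝ) from (Real.rpow_natCast _ 2).symm,
            ← Real.rpow_neg (by linarith), ← Real.rpow_add (by linarith)]
          norm_num

lemma tendsto_logpow_div (s : ℕ) :
    Tendsto (fun n : ℕ => (1 + Real.log n) ^ s / (n:ℝ)) atTop (𝓝 0) := by
  obtain ⟨C, hC, hb⟩ := log_pow_le_sqrt s
  have h2 : Tendsto (fun n : ℕ => C / Real.sqrt n) atTop (𝓝 0) := by
    refine Tendsto.div_atTop tendsto_const_nhds ?_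
    have : Tendsto (fun n : ℕ => ((n:ℝ) ^ ((1:ℝ)/2))) atTop atTop :=
      (tendsto_rpow_atTop (by norm_num)).comp tendsto_natCast_atTop_atTop
    exact this.congr fun n => (Real.sqrt_eq_rpow _).symm
  refine squeeze_zero' (Eventually.of_forall ?_) ?_ h2
  · intro n; positivity
  · filter_upwards [eventually_ge_atTop 1] with n hn
    have hn1 : (1:ℝ) ≤ (n:ℝ) := by exact_mod_cast hn
    have hsq : 0 < Real.sqrt n := Real.sqrt_pos.2 (by linarith)
    rw [div_le_div_iff₀ (by linarith) hsq]
    calc (1 + Real.log n) ^ s * Real.sqrt n ≤ C * Real.sqrt n * Real.sqrt n := by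
          refine mul_le_mul_of_nonneg_right (hb n hn) hsq.le
      _ = C * (n:ℝ) := by rw [mul_assoc, Real.mul_self_sqrt (by linarith)]
      _ = C * (n:ℝ) := rfl

lemma abel_identity (ε : ℂ) (g : ℕ → ℂ) (M : ℕ) :
    ∑ n ∈ Finset.range M, ε ^ n * g n
      = (∑ n ∈ Finset.range M, ε ^ n) * g M
        - ∑ n ∈ Finset.range M, (∑ i ∈ Finset.range (n+1), ε ^ i) * (g (n+1) - g n) := by
  induction M with
  | zero => simp
  | succ M ih =>
    rw [Finset.sum_range_succ, ih, Finset.sum_range_succ (f := fun n =>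
      (∑ i ∈ Finset.range (n+1), ε ^ i) * (g (n+1) - g n)),
      Finset.sum_range_succ (f := fun n => ε ^ n)]
    ring

lemma dirichlet_test (ε : ℂ) (hε : ‖ε‖ = 1) (hne : ε ≠ 1) (g : ℕ → ℂ)
    (hg0 : Tendsto g atTop (𝓝 0))
    (hgs : Summable fun n => ‖g (n+1) - g n‖) :
    ∃ L : ℂ, Tendsto (fun M => ∑ n ∈ Finset.range M, ε ^ n * g n) atTop (𝓝 L) := by
  set B : ℝ := 2 / ‖ε - 1‖ with hB
  have hpos : 0 < ‖ε - 1‖ := by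
    rw [norm_pos_iff, sub_ne_zero]; exact hne
  have hEbound : ∀ m : ℕ, ‖∑ i ∈ Finset.range m, ε ^ i‖ ≤ B := by
    intro m
    rw [geom_sum_eq hne, norm_div, hB]
    refine (div_le_div_iff_of_pos_right hpos).2 ?_
    calc ‖ε ^ m - 1‖ ≤ ‖ε ^ m‖ + ‖(1:ℂ)‖ := norm_sub_le _ _
      _ = 2 := by rw [norm_pow, hε, one_pow, norm_one]; norm_num
  have hsummand : Summable (fun n => (∑ i ∈ Finset.range (n+1), ε ^ i) * (g (n+1) - g n)) := by
    refine Summable.of_norm ?_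
    refine Summable.of_nonneg_of_le (fun n => norm_nonneg _) (fun n => ?_) (hgs.mul_left B)
    rw [norm_mul]
    exact mul_le_mul_of_nonneg_right (hEbound _) (norm_nonneg _)
  obtain ⟨T, hT⟩ := hsummand
  refine ⟨-T, ?_⟩
  have h1 : Tendsto (fun M => (∑ n ∈ Finset.range M, ε ^ n) * g M) atTop (𝓝 0) := by
    refine squeeze_zero_norm (a := fun M => B * ‖g M‖) (fun M => ?_) ?_
    · rw [norm_mul]
      exact mul_le_mul_of_nonneg_right (hEbound M) (norm_nonneg _)
    · simpa using (hg0.norm.const_mul B)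
  have h2 := hT.tendsto_sum_nat
  have := h1.sub h2
  rw [zero_sub] at this
  exact this.congr fun M => (abel_identity ε g M).symm

lemma pow_sub_pow_le_of_le_one {x y : ℝ} (hy : 0 ≤ y) (hxy : y ≤ x) (hx : x ≤ 1) (K : ℕ) :
    x ^ K - y ^ K ≤ K * (x - y) := by
  induction K with
  | zero => simp
  | succ K ih =>
    have hxK : x ^ K ≤ 1 := pow_le_one₀ (hy.trans hxy) hx
    have hyK : y ^ K ≤ x ^ K := pow_le_pow_left₀ hy hxy K
    have hx0 : 0 ≤ x := hy.trans hxy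
    have hyKn : 0 ≤ y ^ K := pow_nonneg hy K
    calc x ^ (K+1) - y ^ (K+1) = x * (x ^ K - y ^ K) + (x - y) * y ^ K := by ring
      _ ≤ (K + 1 : ℕ) * (x - y) := by
          push_cast
          nlinarith [sub_nonneg.2 hyK, sub_nonneg.2 hxy]

lemma norm_one_of_pow_eq_one {z : ℂ} {N : ℕ} (hN : 1 ≤ N) (h : z ^ N = 1) : ‖z‖ = 1 := by
  have h' : ‖z‖ ^ N = 1 := by rw [← norm_pow, h, norm_one]
  rcases lt_trichotomy ‖z‖ 1 with hlt | heq | hgt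
  · have := pow_lt_one₀ (norm_nonneg z) hlt (Nat.one_le_iff_ne_zero.mp hN)
    rw [h'] at this; exact absurd this (lt_irrefl _)
  · exact heq
  · have := one_lt_pow₀ hgt (by omega : N ≠ 0)
    rw [h'] at this; exact absurd this (lt_irrefl _)

/-- For `N ≥ 1`, `r ≥ 1`, exponents `kᵢ ≥ 1` and `N`-th roots of unity `εᵢ` with
`(k_r, ε_r) ≠ (1, 1)`, the partial sums of the cyclotomic multiple zeta series converge. -/
theorem cmzv_converges (N r : ℕ) (hN : 1 ≤ N) (hr : 1 ≤ r)
    (k : Fin r → ℕ) (hk : ∀ i, 1 ≤ k i)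
    (ε : Fin r → ℂ) (hε : ∀ i, ε i ^ N = 1)
    (hlast : ¬(k ⟨r - 1, by omega⟩ = 1 ∧ ε ⟨r - 1, by omega⟩ = 1)) :
    ∃ L : ℂ, Tendsto (cmzvPartial r k ε) atTop (𝓝 L) := by
  obtain ⟨s, rfl⟩ : ∃ s, r = s + 1 := ⟨r - 1, by omega⟩
  have hεn : ∀ i, ‖ε i‖ = 1 := fun i => norm_one_of_pow_eq_one hN (hε i)
  have hidx : (⟨s + 1 - 1, by omega⟩ : Fin (s+1)) = Fin.last s := rfl
  rw [hidx] at hlast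
  set K := k (Fin.last s) with hK
  set εL := ε (Fin.last s) with hεL
  have hK1 : 1 ≤ K := hk _
  set k' : Fin s → ℕ := fun i => k i.castSucc with hk'
  set ε' : Fin s → ℂ := fun i => ε i.castSucc with hε'
  set A : ℕ → ℂ := fun m => cmzvPartial s k' ε' m with hA
  set g : ℕ → ℂ := fun n => A (n - 1) / ((n : ℂ)) ^ K with hg
  -- key rewriting
  have hg0eq : g 0 = 0 := by
    simp only [hg]
    rw [Nat.cast_zero, zero_pow (by omega : K ≠ 0), div_zero]
  have key : ∀ M, cmzvPartial (s+1) k ε M = ∑ n ∈ Finset.range (M+1), εL ^ n * g n := by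
    intro M
    rw [cmzvPartial_succ, Finset.sum_range_succ' (fun n => εL ^ n * g n) M]
    rw [pow_zero, one_mul, hg0eq, add_zero]
    rw [show Finset.Icc 1 M = Finset.Ico 1 (M+1) by rw [Finset.Ico_add_one_right_eq_Icc],
      Finset.sum_Ico_eq_sum_range]
    simp only [add_tsub_cancel_right]
    refine Finset.sum_congr rfl fun i _ => ?_
    rw [show 1 + i = i + 1 by omega]
    simp only [hg, hA, hk', hε']
    rw [div_mul_eq_mul_div, mul_div_assoc]
  -- norm bound for g
  have hgnorm : ∀ n : ℕ, 1 ≤ n → ‖g n‖ ≤ hsum n ^ s / ((n:ℝ)) ^ K := by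
    intro n hn
    simp only [hg]
    rw [norm_div, norm_pow, Complex.norm_natCast]
    have hAb : ‖A (n - 1)‖ ≤ hsum n ^ s := by
      refine (norm_cmzvPartial_le s k' ε' (fun i => hk _) (fun i => hεn _) (n-1)).trans ?_
      exact pow_le_pow_left₀ (hsum_nonneg _) (hsum_mono (by omega)) _
    have hnp : (0:ℝ) < ((n:ℝ)) ^ K := by
      have : (0:ℝ) < (n:ℝ) := by exact_mod_cast hn
      positivity
    exact (div_le_div_iff_of_pos_right hnp).2 hAb
  -- tendsto g -> 0
  have hhl : ∀ n : ℕ, 1 ≤ n → hsum n ^ s ≤ (1 + Real.log n) ^ s := fun n hn =>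
    pow_le_pow_left₀ (hsum_nonneg n) (hsum_le n) s
  have hg0 : Tendsto g atTop (𝓝 0) := by
    refine squeeze_zero_norm' ?_ (tendsto_logpow_div s)
    filter_upwards [eventually_ge_atTop 1] with n hn
    have hn1 : (1:ℝ) ≤ (n:ℝ) := by exact_mod_cast hn
    refine (hgnorm n hn).trans ?_
    have h2 : (n:ℝ) ≤ (n:ℝ) ^ K := by
      calc (n:ℝ) = (n:ℝ) ^ 1 := (pow_one _).symm
        _ ≤ (n:ℝ) ^ K := pow_le_pow_right₀ hn1 hK1
    have hl0 : (0:ℝ) ≤ (1 + Real.log n) ^ s :=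
      pow_nonneg (by have := Real.log_natCast_nonneg n; linarith) s
    exact div_le_div₀ hl0 (hhl n hn) (by linarith) h2
  -- summability of variation
  have hvar : ∀ m : ℕ, 1 ≤ m →
      ‖g (m+1) - g m‖ ≤ (4 * (1 + (K:ℝ))) * ((1 + Real.log ((m+1:ℕ))) ^ s / (((m+1:ℕ)):ℝ) ^ 2) := by
    intro m hm
    have hm1 : (1:ℝ) ≤ (m:ℝ) := by exact_mod_cast hm
    have hm0 : (0:ℝ) < (m:ℝ) := by linarith
    have hsplit : g (m+1) - g m
        = (A m - A (m-1)) / ((m+1 : ℕ) : ℂ) ^ K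
          + A (m-1) * (1 / ((m+1 : ℕ) : ℂ) ^ K - 1 / ((m : ℕ) : ℂ) ^ K) := by
      simp only [hg, add_tsub_cancel_right]
      have hmC : ((m:ℂ)) ^ K ≠ 0 := by
        refine pow_ne_zero _ ?_
        exact_mod_cast (by omega : (m:ℕ) ≠ 0)
      have hmC1 : (((m+1 : ℕ)):ℂ) ^ K ≠ 0 := by
        refine pow_ne_zero _ ?_
        exact_mod_cast (by omega : ((m+1 : ℕ)) ≠ 0)
      push_cast at hmC1 ⊢
      field_simp
      ring
    have hterm1 : ‖(A m - A (m-1)) / ((m+1 : ℕ) : ℂ) ^ K‖ ≤ hsum (m+1) ^ s / ((m:ℝ)) ^ 2 := by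
      rw [norm_div, norm_pow, Complex.norm_natCast]
      have hdiff : ‖A m - A (m-1)‖ ≤ hsum m ^ s / m :=
        norm_cmzvPartial_sub_le s k' ε' (fun i => hk _) (fun i => hεn _) hm
      have hd2 : ‖A m - A (m-1)‖ ≤ hsum (m+1) ^ s / m := by
        refine hdiff.trans ((div_le_div_iff_of_pos_right hm0).2 ?_)
        exact pow_le_pow_left₀ (hsum_nonneg _) (hsum_mono (by omega)) _
      have hden : (m:ℝ) ≤ (((m+1:ℕ)):ℝ) ^ K := by
        push_cast
        calc (m:ℝ) ≤ (m:ℝ) + 1 := by linarith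
          _ = ((m:ℝ)+1) ^ 1 := (pow_one _).symm
          _ ≤ ((m:ℝ)+1) ^ K := pow_le_pow_right₀ (by linarith) hK1
      calc ‖A m - A (m-1)‖ / (((m+1:ℕ)):ℝ) ^ K
          ≤ (hsum (m+1) ^ s / m) / (m:ℝ) :=
            div_le_div₀ (div_nonneg (pow_nonneg (hsum_nonneg _) _) hm0.le) hd2 hm0 hden
        _ = hsum (m+1) ^ s / ((m:ℝ)) ^ 2 := by rw [div_div]; ring_nf
    have hterm2 : ‖A (m-1) * (1 / ((m+1 : ℕ) : ℂ) ^ K - 1 / ((m : ℕ) : ℂ) ^ K)‖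
        ≤ hsum (m+1) ^ s * (K / ((m:ℝ)) ^ 2) := by
      rw [norm_mul]
      have hA1 : ‖A (m-1)‖ ≤ hsum (m+1) ^ s := by
        refine (norm_cmzvPartial_le s k' ε' (fun i => hk _) (fun i => hεn _) (m-1)).trans ?_
        exact pow_le_pow_left₀ (hsum_nonneg _) (hsum_mono (by omega)) _
      have hreal : ‖(1 / ((m+1 : ℕ) : ℂ) ^ K - 1 / ((m : ℕ) : ℂ) ^ K)‖
          ≤ K / ((m:ℝ)) ^ 2 := by
        have hcast : (1 / ((m+1 : ℕ) : ℂ) ^ K - 1 / ((m : ℕ) : ℂ) ^ K)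
            = (((1 / ((m+1 : ℕ) : ℝ) ^ K - 1 / ((m : ℕ) : ℝ) ^ K) : ℝ) : ℂ) := by
          push_cast
          norm_num
        rw [hcast, Complex.norm_real]
        rw [Real.norm_eq_abs, abs_sub_comm, abs_of_nonneg]
        · have hb := pow_sub_pow_le_of_le_one
            (x := 1 / (m:ℝ)) (y := 1 / ((m:ℝ)+1))
            (by positivity) (by rw [div_le_div_iff₀ (by linarith) hm0]; linarith)
            (by rw [div_le_one hm0]; linarith) K
          have he1 : (1 / (m:ℝ)) ^ K = 1 / ((m:ℕ):ℝ) ^ K := by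
            rw [div_pow, one_pow]
          have he2 : (1 / ((m:ℝ)+1)) ^ K = 1 / (((m+1:ℕ)):ℝ) ^ K := by
            rw [div_pow, one_pow]
            push_cast
            ring_nf
          rw [he1, he2] at hb
          refine hb.trans ?_
          have : 1 / (m:ℝ) - 1 / ((m:ℝ)+1) = 1 / ((m:ℝ) * ((m:ℝ)+1)) := by
            field_simp
            ring
          rw [this, mul_one_div]
          refine div_le_div_of_nonneg_left (by positivity) (by nlinarith) ?_
          nlinarith
        · rw [sub_nonneg]
          refine div_le_div_of_nonneg_left one_pos.le ?_ ?_ |>.trans_eq rfl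
          · positivity
          · refine pow_le_pow_left₀ (by positivity) ?_ K
            push_cast; linarith
      exact mul_le_mul hA1 hreal (norm_nonneg _) (pow_nonneg (hsum_nonneg _) _)
    calc ‖g (m+1) - g m‖ ≤ ‖(A m - A (m-1)) / ((m+1 : ℕ) : ℂ) ^ K‖
          + ‖A (m-1) * (1 / ((m+1 : ℕ) : ℂ) ^ K - 1 / ((m : ℕ) : ℂ) ^ K)‖ := by
          rw [hsplit]; exact norm_add_le _ _
      _ ≤ hsum (m+1) ^ s / ((m:ℝ)) ^ 2 + hsum (m+1) ^ s * (K / ((m:ℝ)) ^ 2) :=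
          add_le_add hterm1 hterm2
      _ = (1 + K) * (hsum (m+1) ^ s / ((m:ℝ)) ^ 2) := by ring
      _ ≤ (4 * (1 + (K:ℝ))) * ((1 + Real.log ((m+1:ℕ))) ^ s / (((m+1:ℕ)):ℝ) ^ 2) := by
          have hb : hsum (m+1) ^ s ≤ (1 + Real.log ((m+1:ℕ))) ^ s := hhl (m+1) (by omega)
          have ha0 : (0:ℝ) ≤ hsum (m+1) ^ s := pow_nonneg (hsum_nonneg _) _
          have hK0 : (0:ℝ) ≤ (K:ℝ) := by positivity
          have hmain : hsum (m+1) ^ s / ((m:ℝ)) ^ 2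
              ≤ 4 * (1 + Real.log ((m+1:ℕ))) ^ s / (((m+1:ℕ)):ℝ) ^ 2 := by
            rw [div_le_div_iff₀ (by positivity) (by positivity)]
            push_cast
            push_cast at hb
            have h1 : (((m:ℝ))+1)^2 ≤ 4 * ((m:ℝ))^2 := by nlinarith
            have hb0 : (0:ℝ) ≤ (1 + Real.log (((m:ℝ))+1)) ^ s := ha0.trans hb
            nlinarith [mul_le_mul_of_nonneg_right hb (by positivity : (0:ℝ) ≤ (((m:ℝ))+1)^2),
              mul_le_mul_of_nonneg_left h1 hb0]
          calc (1 + (K:ℝ)) * (hsum (m+1) ^ s / ((m:ℝ)) ^ 2)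
              ≤ (1 + (K:ℝ)) * (4 * (1 + Real.log ((m+1:ℕ))) ^ s / (((m+1:ℕ)):ℝ) ^ 2) :=
                mul_le_mul_of_nonneg_left hmain (by positivity)
            _ = (4 * (1 + (K:ℝ))) * ((1 + Real.log ((m+1:ℕ))) ^ s / (((m+1:ℕ)):ℝ) ^ 2) := by
                ring
  have hgs : Summable (fun n => ‖g (n+1) - g n‖) := by
    rw [← summable_nat_add_iff 1]
    have hS : Summable (fun n : ℕ =>
        (4 * (1 + (K:ℝ))) * ((1 + Real.log ((n+2:ℕ))) ^ s / (((n+2:ℕ)):ℝ) ^ 2)) := by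
      exact ((summable_nat_add_iff 2).mpr (summable_logpow_div_sq s)).mul_left _
    refine hS.of_nonneg_of_le (fun n => norm_nonneg _) (fun n => ?_)
    have h := hvar (n+1) (by omega)
    convert h using 4 <;> push_cast <;> ring
  suffices h : ∃ L : ℂ, Tendsto (fun M => ∑ n ∈ Finset.range M, εL ^ n * g n) atTop (𝓝 L) by
    obtain ⟨L, hL⟩ := h
    exact ⟨L, Tendsto.congr (fun M => (key M).symm) (hL.comp (tendsto_add_atTop_nat 1))⟩
  by_cases hne : εL = 1
  · have hK2 : 2 ≤ K := by
      have hK1' : K ≠ 1 := fun h => hlast ⟨h, hne⟩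
      omega
    have hsummable : Summable (fun n => εL ^ n * g n) := by
      simp only [hne, one_pow, one_mul]
      refine Summable.of_norm ?_
      refine (summable_logpow_div_sq s).of_nonneg_of_le (fun n => norm_nonneg _) (fun n => ?_)
      rcases Nat.eq_zero_or_pos n with rfl | hn
      · rw [hg0eq, norm_zero]
        simp
      · have hn1 : (1:ℝ) ≤ (n:ℝ) := by exact_mod_cast hn
        refine (hgnorm n hn).trans ?_
        have hl0 : (0:ℝ) ≤ (1 + Real.log n) ^ s :=
          pow_nonneg (by have := Real.log_natCast_nonneg n; linarith) s
        have h2 : ((n:ℝ)) ^ 2 ≤ (n:ℝ) ^ K := pow_le_pow_right₀ hn1 hK2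
        exact div_le_div₀ hl0 (hhl n hn) (by positivity) h2
    exact ⟨_, hsummable.hasSum.tendsto_sum_nat⟩
  · exact dirichlet_test εL (hεn _) hne g hg0 hgs
end

section
/- For every ε ∈ ℂ with |ε| = 1 and ε ≠ 1, the partial sums ∑_{n=1}^{M} ε^n / n converge as M → ∞ to −log(1−ε), where log denotes the principal branch of the complex logarithm. -/
open Filter Topology Finset Complex

/-- For `ε` on the unit circle with `ε ≠ 1`, the partial sums `∑_{n=1}^M ε^n / n`
converge to `-log(1 - ε)`, with `log` the principal branch of the complex logarithm. -/
theorem tendsto_sum_pow_div_nat (ε : ℂ) (habs : ‖ε‖ = 1) (hne : ε ≠ 1) :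
    Tendsto (fun M : ℕ => ∑ n ∈ Finset.Icc 1 M, ε ^ n / (n : ℂ)) atTop
      (𝓝 (-Complex.log (1 - ε))) := by
  have hε1 : (1 : ℂ) - ε ≠ 0 := sub_ne_zero.mpr (Ne.symm hne)
  have hnorm : ‖ε‖ = 1 := habs
  -- Step 1: via Dirichlet's test, the partial sums converge to some limit `l`.
  have hbound : ∀ n : ℕ, ‖∑ i ∈ range n, ε ^ (i + 1)‖ ≤ 2 / ‖1 - ε‖ := by
    intro n
    have h1 : ∑ i ∈ range n, ε ^ (i + 1) = ε * ((ε ^ n - 1) / (ε - 1)) := by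
      simp_rw [pow_succ']
      rw [← Finset.mul_sum, geom_sum_eq hne]
    rw [h1, norm_mul, hnorm, one_mul, norm_div]
    have h2 : ‖ε ^ n - 1‖ ≤ 2 := by
      calc ‖ε ^ n - 1‖ ≤ ‖ε ^ n‖ + ‖(1 : ℂ)‖ := norm_sub_le _ _
        _ = 2 := by rw [norm_pow, hnorm, norm_one]; norm_num
    rw [show ‖ε - 1‖ = ‖1 - ε‖ from (norm_sub_rev _ _)]
    have hpos : (0:ℝ) < ‖1 - ε‖ := norm_pos_iff.mpr hε1
    exact (div_le_div_iff_of_pos_right hpos).mpr h2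
  have hcauchy : CauchySeq fun n ↦ ∑ i ∈ range n, ((i + 1 : ℝ))⁻¹ • ε ^ (i + 1) := by
    refine Antitone.cauchySeq_series_mul_of_tendsto_zero_of_bounded ?_ ?_ hbound
    · intro a b hab
      refine inv_anti₀ (by positivity) ?_
      have : (a:ℝ) ≤ b := Nat.cast_le.mpr hab
      linarith
    · exact tendsto_one_div_add_atTop_nhds_zero_nat.congr (by simp [one_div])
  obtain ⟨l, hl⟩ := cauchySeq_tendsto_of_complete hcauchy
  have hl1 : Tendsto (fun M : ℕ ↦ ∑ i ∈ range M, ε ^ (i + 1) / ((i + 1 : ℕ) : ℂ)) atTop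
      (𝓝 l) := by
    refine hl.congr fun M ↦ Finset.sum_congr rfl fun i _ ↦ ?_
    rw [Complex.real_smul]
    push_cast
    rw [inv_mul_eq_div]
  -- the full power series partial sums (with `n = 0` term equal to `0`)
  have hl2 : Tendsto (fun M : ℕ ↦ ∑ i ∈ range M, ε ^ i / (i : ℂ)) atTop (𝓝 l) := by
    rw [← Filter.tendsto_add_atTop_iff_nat 1]
    refine hl1.congr fun M ↦ ?_
    rw [Finset.sum_range_succ']
    simp
  -- Step 2: Abel's limit theorem along the radial approach
  have hAbel := Complex.tendsto_tsum_powerSeries_nhdsWithin_lt (f := fun n ↦ ε ^ n / (n : ℂ)) hl2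
  rw [Filter.tendsto_map'_iff] at hAbel
  -- Step 3: identify the radial sums with `-log (1 - ε * r)`
  have hradial : ∀ r : ℝ, r ∈ Set.Ioo (0 : ℝ) 1 →
      (∑' n : ℕ, ε ^ n / (n : ℂ) * (r : ℂ) ^ n) = -Complex.log (1 - ε * r) := by
    intro r hr
    have hlt : ‖ε * (r : ℂ)‖ < 1 := by
      rw [norm_mul, hnorm, one_mul, Complex.norm_real, Real.norm_eq_abs,
        abs_of_pos hr.1]
      exact hr.2
    have := Complex.hasSum_taylorSeries_neg_log hlt
    rw [← this.tsum_eq]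
    refine tsum_congr fun n ↦ ?_
    rw [mul_pow, mul_div_right_comm]
  -- Step 4: continuity of `-log (1 - ε * r)` at `r = 1`
  have hslit : (1 : ℂ) - ε ∈ Complex.slitPlane := by
    rw [Complex.mem_slitPlane_iff]
    rcases eq_or_ne ε.im 0 with him | him
    · left
      have hre : |ε.re| = 1 := by
        have : ε = (ε.re : ℂ) := Complex.ext rfl (by simp [him])
        rw [this, Complex.norm_real, Real.norm_eq_abs] at habs
        exact habs
      rcases abs_eq (by norm_num : (0:ℝ) ≤ 1) |>.mp hre with h | h
      · exact absurd (Complex.ext h (by simp [him])) hne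
      · rw [Complex.sub_re, Complex.one_re, h]; norm_num
    · right
      simpa using him
  have hcont : Tendsto (fun r : ℝ ↦ -Complex.log (1 - ε * r)) (𝓝[<] (1 : ℝ))
      (𝓝 (-Complex.log (1 - ε))) := by
    have h1 : ContinuousAt (fun r : ℝ ↦ (1 : ℂ) - ε * r) 1 := by fun_prop
    have h2 : ContinuousAt Complex.log (1 - ε) :=
      (Complex.differentiableAt_log hslit).continuousAt
    have h3 : ContinuousAt (fun r : ℝ ↦ -Complex.log (1 - ε * r)) 1 := by
      have : (1 : ℂ) - ε * ((1 : ℝ) : ℂ) = 1 - ε := by simp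
      exact (ContinuousAt.comp (this ▸ h2) h1).neg
    have h4 : Tendsto (fun r : ℝ ↦ -Complex.log (1 - ε * r)) (𝓝[<] (1 : ℝ))
        (𝓝 (-Complex.log (1 - ε * ((1:ℝ):ℂ)))) :=
      h3.tendsto.mono_left nhdsWithin_le_nhds
    simpa using h4
  -- Step 5: `l = -log (1 - ε)` by uniqueness of limits
  have hmem : Set.Ioo (0 : ℝ) 1 ∈ 𝓝[<] (1 : ℝ) :=
    Ioo_mem_nhdsLT_of_mem (by constructor <;> norm_num)
  have hAbel' : Tendsto (fun r : ℝ ↦ -Complex.log (1 - ε * r)) (𝓝[<] (1 : ℝ)) (𝓝 l) :=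
    hAbel.congr' (eventually_of_mem hmem fun r hr ↦ hradial r hr)
  have hlval : l = -Complex.log (1 - ε) := tendsto_nhds_unique hAbel' hcont
  -- Step 6: convert the range sums to Icc sums
  rw [← hlval]
  refine hl1.congr fun M ↦ ?_
  induction M with
  | zero => simp
  | succ M ih =>
    rw [Finset.sum_range_succ, ih, Finset.sum_Icc_succ_top (Nat.one_le_iff_ne_zero.mpr (Nat.succ_ne_zero M))]
end

section
/- For every ε ∈ ℂ with |ε| = 1 and ε ≠ 1 and every integer r ≥ 1, the partial sums ∑_{0 < n₁ < ⋯ < n_r ≤ M} ε^{n_r} / (n₁ n₂ ⋯ n_r) converge as M → ∞ to ((−1)^r / r!) · (log(1−ε))^r, where log denotes the principal branch of the complex logarithm. Equivalently, the unit cyclotomic multiple zeta value ζ(1,…,1; 1,…,1,ε) of weight and depth r equals ((−1)^r / r!) (log(1−ε))^r. -/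
open Filter Topology

/-- Partial sum `∑_{0 < n₁ < ⋯ < n_r ≤ M} ε^{n_r} / (n₁ n₂ ⋯ n_r)` of the series defining
the unit cyclotomic multiple zeta value `ζ(1,…,1; 1,…,1,ε)` of weight and depth `r`. -/
noncomputable def unitZetaPartial (ε : ℂ) (r M : ℕ) : ℂ :=
  ∑ n ∈ (Fintype.piFinset fun _ : Fin r => Finset.Icc 1 M).filter
      (fun n => ∀ i j : Fin r, i < j → n i < n j),
    ∏ i : Fin r, (if i.1 = r - 1 then ε else 1) ^ n i / (n i : ℂ)

namespace UnitZetaAux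
open Finset

/-- `B r N = ∑_{1 ≤ m₁ < ⋯ < m_r ≤ N} 1/(m₁⋯m_r)` (elementary symmetric sums). -/
noncomputable def B : ℕ → ℕ → ℝ
  | 0, _ => 1
  | r+1, N => ∑ m ∈ Finset.Icc 1 N, B r (m-1) / m

/-- Coefficient of the power series `(-log(1-z))^r / r!`, times `r!`... actually
`c r n` is the coefficient of `z^n` in `(-log(1-z))^r/r!` for `r ≥ 1`. -/
noncomputable def c : ℕ → ℕ → ℝ
  | 0, n => if n = 0 then 1 else 0
  | r+1, n => if n = 0 then 0 else B r (n-1) / n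

lemma B_nonneg (r N : ℕ) : 0 ≤ B r N := by
  induction r generalizing N with
  | zero => simp [B]
  | succ r ih =>
      rw [B]
      exact Finset.sum_nonneg fun m _ => div_nonneg (ih _) (by positivity)

lemma c_nonneg (r n : ℕ) : 0 ≤ c r n := by
  cases r with
  | zero => simp only [c]; split <;> norm_num
  | succ r =>
      simp only [c]; split
      · exact le_rfl
      · exact div_nonneg (B_nonneg _ _) (by positivity)

lemma c_zero (r : ℕ) : c (r+1) 0 = 0 := by simp [c]

/-- Key recurrence: `n · c (r+1) n = ∑_{m < n} c r m`. -/
lemma star (r n : ℕ) : (n : ℝ) * c (r+1) n = ∑ m ∈ range n, c r m := by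
  rcases Nat.eq_zero_or_pos n with rfl | hn
  · simp [c]
  have hrange : range n = insert 0 (Finset.Icc 1 (n-1)) := by
    ext m
    simp only [mem_range, mem_insert, mem_Icc]
    omega
  have h0 : (0 : ℕ) ∉ Finset.Icc 1 (n-1) := by simp
  rw [hrange, Finset.sum_insert h0]
  have hc : c (r+1) n = B r (n-1) / n := by
    simp [c, Nat.pos_iff_ne_zero.mp hn]
  rw [hc, mul_div_cancel₀ _ (by exact_mod_cast Nat.pos_iff_ne_zero.mp hn : (n:ℝ) ≠ 0)]
  cases r with
  | zero =>
      simp [c, B]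
  | succ r =>
      have : ∀ m ∈ Finset.Icc 1 (n-1), c (r+1) m = B r (m-1) / m := by
        intro m hm
        simp only [mem_Icc] at hm
        simp [c, Nat.pos_iff_ne_zero.mp hm.1]
      rw [Finset.sum_congr rfl this]
      simp [c, B]


lemma inner_reindex (m n : ℕ) :
    ∑ k ∈ Finset.Ioo m n, (1 : ℝ) / ((n - k : ℕ) : ℝ)
      = ∑ k ∈ Finset.Ioo m n, (1 : ℝ) / ((k - m : ℕ) : ℝ) := by
  refine Finset.sum_nbij' (i := fun k => n + m - k) (j := fun k => n + m - k) ?_ ?_ ?_ ?_ ?_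
  · intro a ha; simp only [mem_Ioo] at *; omega
  · intro a ha; simp only [mem_Ioo] at *; omega
  · intro a ha; simp only [mem_Ioo] at *; omega
  · intro a ha; simp only [mem_Ioo] at *; omega
  · intro a ha
    simp only [mem_Ioo] at ha
    have h2 : n + m - a - m = n - a := by omega
    simp only [h2]

lemma swap_sum (n : ℕ) (F : ℕ → ℕ → ℝ) :
    ∑ k ∈ range n, ∑ m ∈ range k, F m k = ∑ m ∈ range n, ∑ k ∈ Finset.Ioo m n, F m k := by
  rw [Finset.sum_sigma', Finset.sum_sigma']
  refine Finset.sum_nbij' (i := fun p => ⟨p.2, p.1⟩) (j := fun p => ⟨p.2, p.1⟩) ?_ ?_ ?_ ?_ ?_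
  · rintro ⟨k, m⟩ h
    simp only [Finset.mem_sigma, mem_range, mem_Ioo] at *
    omega
  · rintro ⟨m, k⟩ h
    simp only [Finset.mem_sigma, mem_range, mem_Ioo] at *
    omega
  · rintro ⟨k, m⟩ h; rfl
  · rintro ⟨m, k⟩ h; rfl
  · rintro ⟨k, m⟩ h; rfl


lemma key (r : ℕ) : ∀ n, ∑ k ∈ range n, c r k / ((n - k : ℕ) : ℝ) = ((r:ℝ) + 1) * c (r+1) n := by
  induction r with
  | zero =>
      intro n
      rcases Nat.eq_zero_or_pos n with rfl | hn
      · simp [c]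
      have hn0 : n ≠ 0 := hn.ne'
      rw [Finset.sum_eq_single 0]
      · simp [c, B, hn0]
      · intro k _ hk0
        simp [c, hk0]
      · intro h
        exact absurd (Finset.mem_range.mpr hn) h
  | succ r ih =>
      intro n
      rcases Nat.eq_zero_or_pos n with rfl | hn
      · simp [c]
      have hn' : (n:ℝ) ≠ 0 := by exact_mod_cast hn.ne'
      have main : (n:ℝ) * ∑ k ∈ range n, c (r+1) k / ((n-k:ℕ):ℝ)
          = ((r:ℝ)+2) * ((n:ℝ) * c (r+1+1) n) := by
        rw [Finset.mul_sum]
        have h1 : ∀ k ∈ range n, (n:ℝ) * (c (r+1) k / ((n-k:ℕ):ℝ))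
            = c (r+1) k + (∑ m ∈ range k, c r m) / ((n-k:ℕ):ℝ) := by
          intro k hk
          rw [mem_range] at hk
          rw [← star]
          have hc : ((n - k : ℕ) : ℝ) = (n:ℝ) - k := by
            have := hk.le
            push_cast [Nat.cast_sub this]
            ring
          have hnk : ((n-k:ℕ):ℝ) ≠ 0 := by
            have h2 : 0 < n - k := by omega
            exact_mod_cast h2.ne'
          rw [hc] at hnk ⊢
          field_simp
          ring
        rw [Finset.sum_congr rfl h1, Finset.sum_add_distrib]
        have h2 : ∑ k ∈ range n, (∑ m ∈ range k, c r m) / ((n-k:ℕ):ℝ)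
            = ((r:ℝ)+1) * ∑ k ∈ range n, c (r+1) k := by
          have e1 : ∀ k ∈ range n, (∑ m ∈ range k, c r m) / ((n-k:ℕ):ℝ)
              = ∑ m ∈ range k, c r m / ((n-k:ℕ):ℝ) := fun k _ => Finset.sum_div _ _ _
          rw [Finset.sum_congr rfl e1, swap_sum]
          have e2 : ∀ m ∈ range n, ∑ k ∈ Finset.Ioo m n, c r m / ((n-k:ℕ):ℝ)
              = ∑ k ∈ Finset.Ioo m n, c r m / ((k-m:ℕ):ℝ) := by
            intro m _
            have : ∀ x ∈ Finset.Ioo m n, c r m / ((n-x:ℕ):ℝ) = c r m * (1 / ((n-x:ℕ):ℝ)) := by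
              intro x _; ring
            rw [Finset.sum_congr rfl this, ← Finset.mul_sum, inner_reindex, Finset.mul_sum]
            exact Finset.sum_congr rfl fun x _ => by ring
          rw [Finset.sum_congr rfl e2, ← swap_sum]
          rw [Finset.mul_sum]
          exact Finset.sum_congr rfl fun k _ => ih k
        rw [h2, star (r+1) n]
        ring
      have main2 : (n:ℝ) * ∑ k ∈ range n, c (r+1) k / ((n-k:ℕ):ℝ)
          = (n:ℝ) * (((r:ℝ)+2) * c (r+1+1) n) := by rw [main]; ring
      have goal' := mul_left_cancel₀ hn' main2
      rw [goal']
      push_cast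
      ring

noncomputable def H (N : ℕ) : ℝ := (harmonic N : ℝ)

lemma H_nonneg (N : ℕ) : 0 ≤ H N := by
  unfold H
  rcases Nat.eq_zero_or_pos N with rfl | h
  · simp [harmonic_zero]
  · exact_mod_cast (harmonic_pos h.ne').le

lemma H_mono : Monotone H := by
  intro a b hab
  unfold H
  have : harmonic a ≤ harmonic b := by
    unfold harmonic
    apply Finset.sum_le_sum_of_subset_of_nonneg (Finset.range_subset_range.mpr hab)
    intro i _ _
    positivity
  exact_mod_cast this

lemma H_eq_sum (N : ℕ) : H N = ∑ m ∈ Finset.Icc 1 N, (1:ℝ) / m := by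
  unfold H
  rw [harmonic_eq_sum_Icc]
  push_cast
  simp [one_div]

lemma B_le_H_pow (r N : ℕ) : B r N ≤ H N ^ r := by
  induction r generalizing N with
  | zero => simp [B]
  | succ r ih =>
      rw [B, pow_succ]
      calc ∑ m ∈ Finset.Icc 1 N, B r (m-1) / m
          ≤ ∑ m ∈ Finset.Icc 1 N, H N ^ r / m := by
            apply Finset.sum_le_sum
            intro m hm
            simp only [mem_Icc] at hm
            have h1 : B r (m-1) ≤ H N ^ r :=
              (ih (m-1)).trans (pow_le_pow_left₀ (H_nonneg _) (H_mono (by omega)) r)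
            have hm0 : (0:ℝ) < m := by exact_mod_cast hm.1
            gcongr
        _ = H N ^ r * H N := by
            rw [H_eq_sum, Finset.mul_sum]
            exact Finset.sum_congr rfl fun m _ => by rw [div_eq_mul_one_div]

lemma B_mono (r : ℕ) : Monotone (B r) := by
  intro a b hab
  cases r with
  | zero => simp [B]
  | succ r =>
      rw [B, B]
      apply Finset.sum_le_sum_of_subset_of_nonneg
      · exact Finset.Icc_subset_Icc_right hab
      · intro i _ _
        exact div_nonneg (B_nonneg _ _) (by positivity)

lemma B_step (s n : ℕ) (hn : n ≠ 0) : B (s+1) n = B (s+1) (n-1) + B s (n-1) / n := by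
  rw [B, B]
  have h : Finset.Icc 1 n = insert n (Finset.Icc 1 (n-1)) := by
    ext m; simp only [mem_Icc, mem_insert]; omega
  rw [h, Finset.sum_insert (by simp; omega)]
  ring


lemma H_le (N : ℕ) : H N ≤ 1 + Real.log N := harmonic_le_one_add_log N

lemma H_le' (n : ℕ) (hn : n ≠ 0) : H (n-1) ≤ 2 + Real.log n := by
  have h1 : H (n-1) ≤ 1 + Real.log (n-1 : ℕ) := H_le _
  have h2 : Real.log (n-1 : ℕ) ≤ 1 + Real.log n := by
    rcases Nat.eq_zero_or_pos (n-1) with h | h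
    · rw [h]
      simp only [Nat.cast_zero, Real.log_zero]
      have : (0:ℝ) ≤ Real.log n := Real.log_natCast_nonneg n
      linarith
    · have : Real.log (n-1 : ℕ) ≤ Real.log n := by
        apply Real.log_le_log (by exact_mod_cast h)
        exact_mod_cast Nat.sub_le n 1
      have h3 : (0:ℝ) ≤ Real.log n := Real.log_natCast_nonneg n
      linarith
  linarith

/-- `c (r+1) n ≤ (2 + log n)^r / n` for `n ≥ 1`. -/
lemma c_le_log (r n : ℕ) (hn : n ≠ 0) : c (r+1) n ≤ (2 + Real.log n) ^ r / n := by
  have hc : c (r+1) n = B r (n-1) / n := by simp [c, hn]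
  rw [hc]
  have hb : B r (n-1) ≤ (2 + Real.log n) ^ r := by
    refine (B_le_H_pow r (n-1)).trans ?_
    exact pow_le_pow_left₀ (H_nonneg _) (H_le' n hn) r
  have hn0 : (0:ℝ) < n := by exact_mod_cast Nat.pos_of_ne_zero hn
  gcongr

/-- bound on successive differences. -/
lemma c_diff_le (r n : ℕ) (hn : n ≠ 0) :
    |c (r+1) (n+1) - c (r+1) n| ≤ 2 * (2 + Real.log n) ^ r / (n:ℝ)^2 := by
  have hn0 : (0:ℝ) < n := by exact_mod_cast Nat.pos_of_ne_zero hn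
  set a := B r (n-1) with ha
  set b := B r n with hb
  have hab : a ≤ b := B_mono r (Nat.sub_le n 1)
  have ha0 : 0 ≤ a := B_nonneg _ _
  have hLpos : (0:ℝ) ≤ 2 + Real.log n := by
    have := Real.log_natCast_nonneg n; linarith
  have haL : a ≤ (2 + Real.log n) ^ r :=
    (B_le_H_pow r (n-1)).trans (pow_le_pow_left₀ (H_nonneg _) (H_le' n hn) r)
  have hdL : (n:ℝ) * (b - a) ≤ (2 + Real.log n) ^ r := by
    cases r with
    | zero =>
        have : b = a := by rw [ha, hb]; simp [B]
        rw [this]; simp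
    | succ s =>
        have hstep := B_step s n hn
        have : (n:ℝ) * (b - a) = B s (n-1) := by
          rw [hb, hstep, ← ha]
          field_simp
          ring
        rw [this]
        refine (B_le_H_pow s (n-1)).trans ?_
        have h1 : H (n-1) ^ s ≤ (2 + Real.log n) ^ s :=
          pow_le_pow_left₀ (H_nonneg _) (H_le' n hn) s
        refine h1.trans ?_
        have h2 : (2 + Real.log n) ^ s ≤ (2 + Real.log n) ^ (s+1) := by
          apply pow_le_pow_right₀ ?_ (by omega)
          have := Real.log_natCast_nonneg n; linarith
        exact h2
  have hd0 : 0 ≤ (n:ℝ) * (b - a) := by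
    apply mul_nonneg (by positivity)
    linarith
  have hc1 : c (r+1) n = a / n := by simp [c, hn, ha]
  have hc2 : c (r+1) (n+1) = b / (n+1) := by
    have : (n + 1 : ℕ) - 1 = n := rfl
    simp [c, this, hb]
  have hne : c (r+1) (n+1) - c (r+1) n = ((n:ℝ)*(b-a) - a) / ((n:ℝ)*((n:ℝ)+1)) := by
    rw [hc1, hc2]
    field_simp
    ring
  rw [hne, abs_div, abs_of_pos (by positivity : (0:ℝ) < (n:ℝ)*((n:ℝ)+1))]
  have hnum : |(n:ℝ)*(b-a) - a| ≤ 2 * (2 + Real.log n) ^ r := by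
    rw [abs_le]
    constructor <;> nlinarith
  calc |(n:ℝ)*(b-a) - a| / ((n:ℝ)*((n:ℝ)+1))
      ≤ (2 * (2 + Real.log n) ^ r) / ((n:ℝ)*((n:ℝ)+1)) := by gcongr
    _ ≤ (2 * (2 + Real.log n) ^ r) / (n:ℝ)^2 := by
        apply div_le_div_of_nonneg_left (by positivity) (by positivity)
        nlinarith

/-- eventually `(2+log n)^r ≤ √n`. -/
lemma eventually_log_pow_le (r : ℕ) :
    ∀ᶠ n : ℕ in atTop, (2 + Real.log n) ^ r ≤ (n:ℝ) ^ ((1:ℝ)/2) := by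
  have h := (isLittleO_log_rpow_rpow_atTop (r:ℝ) (by norm_num : (0:ℝ) < 1/2)).bound
    (by positivity : (0:ℝ) < 1/(2:ℝ)^r)
  have h2 : Tendsto (fun n : ℕ => (n:ℝ)) atTop atTop := tendsto_natCast_atTop_atTop
  have h3 := h2.eventually h
  have h4 : ∀ᶠ n : ℕ in atTop, 2 ≤ Real.log n := by
    have : Tendsto (fun n : ℕ => Real.log n) atTop atTop :=
      Real.tendsto_log_atTop.comp h2
    exact this.eventually_ge_atTop 2
  filter_upwards [h3, h4, eventually_ge_atTop 1] with n hn hlog hn1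
  have hlog0 : (0:ℝ) ≤ Real.log n := by linarith
  have hn0 : (0:ℝ) ≤ (n:ℝ) := by positivity
  have e1 : (2 + Real.log n) ^ r ≤ (2 * Real.log n) ^ r := by
    apply pow_le_pow_left₀ (by linarith) (by linarith)
  have e2 : (2 * Real.log n) ^ r = 2^r * (Real.log n) ^ r := by rw [mul_pow]
  have e3 : (Real.log n) ^ r = (Real.log n) ^ (r:ℝ) := by
    rw [Real.rpow_natCast]
  have e4 : ‖Real.log (n:ℝ) ^ (r:ℝ)‖ ≤ 1/(2:ℝ)^r * ‖(n:ℝ) ^ ((1:ℝ)/2)‖ := hn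
  rw [Real.norm_eq_abs, Real.norm_eq_abs, abs_of_nonneg (Real.rpow_nonneg hlog0 _),
    abs_of_nonneg (Real.rpow_nonneg hn0 _)] at e4
  calc (2 + Real.log n) ^ r ≤ 2^r * (Real.log n) ^ r := by rw [← e2]; exact e1
    _ = 2^r * (Real.log n) ^ (r:ℝ) := by rw [e3]
    _ ≤ 2^r * (1/(2:ℝ)^r * (n:ℝ) ^ ((1:ℝ)/2)) := by
        apply mul_le_mul_of_nonneg_left e4 (by positivity)
    _ = (n:ℝ) ^ ((1:ℝ)/2) := by field_simp

lemma c_tendsto_zero (r : ℕ) : Tendsto (fun n => c (r+1) n) atTop (𝓝 0) := by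
  apply squeeze_zero' (Eventually.of_forall fun n => c_nonneg _ _)
  · filter_upwards [eventually_log_pow_le r, eventually_ge_atTop 1] with n hn hn1
    calc c (r+1) n ≤ (2 + Real.log n) ^ r / n := c_le_log r n (by omega)
      _ ≤ (n:ℝ) ^ ((1:ℝ)/2) / n := by
          have hn0 : (0:ℝ) < n := by exact_mod_cast hn1
          gcongr
      _ = (n:ℝ) ^ (-(1:ℝ)/2) := by
          have hn0 : (0:ℝ) < n := by exact_mod_cast hn1
          rw [show (-(1:ℝ)/2) = (1:ℝ)/2 - 1 by norm_num, Real.rpow_sub hn0, Real.rpow_one]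
  · have : Tendsto (fun x : ℝ => x ^ (-(1:ℝ)/2)) atTop (𝓝 0) := by
      rw [neg_div]
      exact tendsto_rpow_neg_atTop (by norm_num)
    exact this.comp tendsto_natCast_atTop_atTop

lemma c_diff_summable (r : ℕ) : Summable (fun n => |c (r+1) (n+1) - c (r+1) n|) := by
  have hg : Summable (fun n : ℕ => (n:ℝ) ^ (-(3:ℝ)/2)) := by
    rw [Real.summable_nat_rpow]
    norm_num
  apply summable_of_isBigO_nat hg
  rw [Asymptotics.isBigO_iff]
  refine ⟨2, ?_⟩
  filter_upwards [eventually_log_pow_le r, eventually_ge_atTop 1] with n hn hn1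
  have hn0 : (0:ℝ) < n := by exact_mod_cast hn1
  rw [Real.norm_eq_abs, abs_abs, Real.norm_eq_abs,
    abs_of_nonneg (Real.rpow_nonneg hn0.le _)]
  calc |c (r+1) (n+1) - c (r+1) n| ≤ 2 * (2 + Real.log n) ^ r / (n:ℝ)^2 :=
        c_diff_le r n (by omega)
    _ ≤ 2 * (n:ℝ) ^ ((1:ℝ)/2) / (n:ℝ)^2 := by gcongr
    _ = 2 * (n:ℝ) ^ (-(3:ℝ)/2) := by
        rw [mul_div_assoc]
        congr 1
        have h2 : (n:ℝ) ^ (2:ℝ) = (n:ℝ)^(2:ℕ) := by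
          rw [← Real.rpow_natCast (n:ℝ) 2]; norm_num
        rw [show (-(3:ℝ)/2) = (1:ℝ)/2 - 2 by norm_num, Real.rpow_sub hn0, h2]


lemma H_le_self (N : ℕ) : H N ≤ N := by
  unfold H harmonic
  push_cast
  calc (∑ i ∈ range N, ((i:ℝ)+1)⁻¹) ≤ ∑ _i ∈ range N, (1:ℝ) := by
        apply Finset.sum_le_sum
        intro i _
        rw [inv_le_one₀ (by positivity)]
        linarith [Nat.cast_nonneg (α := ℝ) i]
    _ = N := by simp

lemma c_le_pow (r n : ℕ) : c (r+1) n ≤ (n:ℝ)^r := by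
  rcases Nat.eq_zero_or_pos n with rfl | hn
  · simp [c]
  have hn0 : (1:ℝ) ≤ n := by exact_mod_cast hn
  have hc : c (r+1) n = B r (n-1) / n := by simp [c, hn.ne']
  rw [hc]
  calc B r (n-1) / n ≤ B r (n-1) := by
        apply div_le_self (B_nonneg _ _) hn0
    _ ≤ H (n-1) ^ r := B_le_H_pow _ _
    _ ≤ (n:ℝ)^r := by
        apply pow_le_pow_left₀ (H_nonneg _)
        calc H (n-1) ≤ ((n-1 : ℕ):ℝ) := H_le_self _
          _ ≤ (n:ℝ) := by exact_mod_cast Nat.sub_le n 1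

lemma hasSum_c (r : ℕ) {z : ℂ} (hz : ‖z‖ < 1) :
    HasSum (fun n => (c (r+1) n : ℂ) * z^n)
      ((-Complex.log (1-z))^(r+1) / (r+1).factorial) := by
  induction r with
  | zero =>
      have h0 := Complex.hasSum_taylorSeries_neg_log hz
      have he : (fun n : ℕ => z^n / n) = fun n => (c 1 n : ℂ) * z^n := by
        funext n
        cases n with
        | zero => simp [c]
        | succ m =>
            have : c 1 (m+1) = 1/(m+1 : ℝ) := by simp [c, B]
            rw [this]
            push_cast
            field_simp
      rw [he] at h0
      simpa using h0
  | succ r ih =>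
      set L := -Complex.log (1 - z) with hL
      set f : ℕ → ℂ := fun n => (c (r+1) n : ℂ) * z^n with hfdef
      set g : ℕ → ℂ := fun n => z^n / n with hgdef
      have hg : HasSum g L := Complex.hasSum_taylorSeries_neg_log hz
      have hf' : Summable (fun n => ‖f n‖) := by
        have hb : ∀ n : ℕ, ‖f n‖ ≤ (n:ℝ)^r * ‖z‖^n := by
          intro n
          simp only [hfdef, norm_mul, Complex.norm_real, norm_pow, Real.norm_eq_abs,
            abs_of_nonneg (c_nonneg _ _)]
          exact mul_le_mul_of_nonneg_right (c_le_pow r n) (by positivity)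
        exact Summable.of_nonneg_of_le (fun n => norm_nonneg _) hb
          (summable_pow_mul_geometric_of_norm_lt_one r (by simpa using hz))
      have hg' : Summable (fun n => ‖g n‖) := by
        have hb : ∀ n : ℕ, ‖g n‖ ≤ ‖z‖^n := by
          intro n
          simp only [hgdef, norm_div, norm_pow, Complex.norm_natCast]
          cases n with
          | zero => simp
          | succ m =>
              apply div_le_self (by positivity)
              exact_mod_cast Nat.one_le_iff_ne_zero.mpr (Nat.succ_ne_zero m)
        exact Summable.of_nonneg_of_le (fun n => norm_nonneg _) hb
          (summable_geometric_of_lt_one (norm_nonneg z) hz)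
      have hcs : Summable (fun n => ∑ k ∈ range (n+1), f k * g (n-k)) :=
        Summable.of_norm (summable_norm_sum_mul_range_of_summable_norm hf' hg')
      have hS : HasSum (fun n => ∑ k ∈ range (n+1), f k * g (n-k))
          (L^(r+1) / (r+1).factorial * L) := by
        have h1 := hcs.hasSum
        have h2 := tsum_mul_tsum_eq_tsum_sum_range_of_summable_norm hf' hg'
        rw [ih.tsum_eq, hg.tsum_eq] at h2
        rwa [← h2] at h1
      have hterm : ∀ n, ∑ k ∈ range (n+1), f k * g (n-k)
          = ((r:ℂ)+2) * (((c (r+1+1) n : ℝ) : ℂ) * z^n) := by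
        intro n
        have e1 : ∀ k ∈ range (n+1), f k * g (n-k)
            = ((c (r+1) k / ((n-k : ℕ):ℝ) : ℝ) : ℂ) * z^n := by
          intro k hk
          rw [mem_range] at hk
          have hkn : k ≤ n := by omega
          simp only [hfdef, hgdef]
          push_cast
          rw [div_eq_mul_one_div, ← mul_assoc]
          have : (c (r+1) k : ℂ) * z^k * z^(n-k) = (c (r+1) k : ℂ) * z^n := by
            rw [mul_assoc, ← pow_add]
            congr 2
            omega
          rw [mul_assoc ((c (r+1) k : ℂ)) (z^k), ← pow_add]
          have hnk : k + (n - k) = n := by omega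
          rw [hnk]
          ring
        rw [Finset.sum_congr rfl e1, ← Finset.sum_mul, Finset.sum_range_succ]
        have hlast : ((c (r+1) n / ((n-n : ℕ):ℝ) : ℝ) : ℂ) = 0 := by
          simp
        rw [hlast, add_zero]
        have hkey : ∑ k ∈ range n, ((c (r+1) k / ((n-k : ℕ):ℝ) : ℝ) : ℂ)
            = (((((r+1:ℕ):ℝ)+1) * c (r+1+1) n : ℝ) : ℂ) := by
          rw [← Complex.ofReal_sum]
          exact congrArg _ (key (r+1) n)
        rw [hkey]
        push_cast
        ring
      have hS2 : HasSum (fun n => ((r:ℂ)+2) * (((c (r+1+1) n : ℝ) : ℂ) * z^n))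
          (L^(r+1) / (r+1).factorial * L) := by
        rwa [funext hterm] at hS
      have hr2 : ((r:ℂ)+2) ≠ 0 := by
        intro h
        have : ((r:ℂ)+2).re = 0 := by rw [h]; simp
        simp [Complex.add_re] at this
        nlinarith [Nat.cast_nonneg (α := ℝ) r]
      have hS3 := hS2.div_const ((r:ℂ)+2)
      have he2 : (fun n => ((r:ℂ)+2) * (((c (r+1+1) n : ℝ) : ℂ) * z^n) / ((r:ℂ)+2))
          = fun n => ((c (r+1+1) n : ℝ) : ℂ) * z^n := by
        funext n
        rw [mul_comm ((r:ℂ)+2), mul_div_assoc, div_self hr2, mul_one]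
      rw [he2] at hS3
      have hfact : L^(r+1) / (r+1).factorial * L / ((r:ℂ)+2)
          = L^(r+1+1) / (r+1+1).factorial := by
        rw [Nat.factorial_succ (r+1)]
        push_cast
        rw [pow_succ]
        have h1 : ((r:ℂ)+1+1) ≠ 0 := by
          have he : ((r:ℂ)+1+1) = (r:ℂ)+2 := by ring
          rw [he]; exact hr2
        have h2 : ((r+1).factorial : ℂ) ≠ 0 := by
          exact_mod_cast Nat.cast_ne_zero.mpr (Nat.factorial_ne_zero (r+1))
        field_simp
        ring
      rwa [hfact] at hS3

def A (k N : ℕ) : Finset (Fin k → ℕ) :=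
  (Fintype.piFinset fun _ : Fin k => Finset.Icc 1 N).filter
      (fun n => ∀ i j : Fin k, i < j → n i < n j)

lemma uz_eq (ε : ℂ) (r M : ℕ) :
    unitZetaPartial ε r M
      = ∑ n ∈ A r M, ∏ i : Fin r, (if i.1 = r - 1 then ε else 1) ^ n i / (n i : ℂ) := rfl

lemma uz_one (r N : ℕ) :
    unitZetaPartial 1 r N = ∑ n ∈ A r N, ∏ i : Fin r, ((n i : ℂ))⁻¹ := by
  rw [uz_eq]
  apply Finset.sum_congr rfl
  intro n _
  apply Finset.prod_congr rfl
  intro i _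
  rw [ite_self, one_pow, one_div]

lemma peel (ε : ℂ) (r M : ℕ) :
    unitZetaPartial ε (r+1) M
      = ∑ m ∈ Finset.Icc 1 M, ε^m/(m:ℂ) * unitZetaPartial 1 r (m-1) := by
  rw [uz_eq]
  have hr : ∀ m ∈ Finset.Icc 1 M, ε^m/(m:ℂ) * unitZetaPartial 1 r (m-1)
      = ∑ g ∈ A r (m-1), ε^m/(m:ℂ) * ∏ i : Fin r, ((g i : ℂ))⁻¹ := by
    intro m _
    rw [uz_one, Finset.mul_sum]
  rw [Finset.sum_congr rfl hr, Finset.sum_sigma']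
  refine Finset.sum_nbij' (i := fun n => (⟨n (Fin.last r), Fin.init n⟩ :
      (_ : ℕ) × (Fin r → ℕ)))
    (j := fun p => Fin.snoc p.2 p.1) ?_ ?_ ?_ ?_ ?_
  · -- forward membership
    intro n hn
    simp only [A, Finset.mem_filter, Fintype.mem_piFinset, Finset.mem_Icc] at hn
    obtain ⟨hmem, hmono⟩ := hn
    simp only [Finset.mem_sigma, Finset.mem_Icc, A, Finset.mem_filter,
      Fintype.mem_piFinset]
    refine ⟨⟨(hmem _).1, (hmem _).2⟩, ⟨?_, ?_⟩⟩
    · intro i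
      have h1 := (hmem i.castSucc).1
      have h2 := hmono i.castSucc (Fin.last r) (Fin.castSucc_lt_last i)
      have h3 := (hmem (Fin.last r)).1
      simp only [Fin.init]
      omega
    · intro i j hij
      exact hmono i.castSucc j.castSucc (by rwa [Fin.castSucc_lt_castSucc_iff])
  · -- backward membership
    rintro ⟨m, g⟩ hp
    simp only [Finset.mem_sigma, Finset.mem_Icc, A, Finset.mem_filter,
      Fintype.mem_piFinset] at hp
    obtain ⟨⟨hm1, hm2⟩, hg, hmono⟩ := hp
    simp only [A, Finset.mem_filter, Fintype.mem_piFinset, Finset.mem_Icc]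
    constructor
    · intro i
      refine Fin.lastCases ?_ ?_ i
      · rw [Fin.snoc_last]
        exact ⟨hm1, hm2⟩
      · intro i'
        rw [Fin.snoc_castSucc]
        have := hg i'
        omega
    · intro i j hij
      rcases Fin.eq_castSucc_or_eq_last j with ⟨j', rfl⟩ | rfl
      · have hi' : i ≠ Fin.last r := by
          intro h
          rw [h] at hij
          exact absurd (hij.trans (Fin.castSucc_lt_last j')) (lt_irrefl _)
        obtain ⟨i', rfl⟩ := Fin.exists_castSucc_eq.mpr hi'
        rw [Fin.snoc_castSucc, Fin.snoc_castSucc]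
        exact hmono i' j' (by rwa [← Fin.castSucc_lt_castSucc_iff])
      · have hi' : i ≠ Fin.last r := ne_of_lt hij
        obtain ⟨i', rfl⟩ := Fin.exists_castSucc_eq.mpr hi'
        rw [Fin.snoc_castSucc, Fin.snoc_last]
        have := hg i'
        omega
  · -- left inverse
    intro n _
    exact Fin.snoc_init_self n
  · -- right inverse
    rintro ⟨m, g⟩ _
    simp only [Fin.snoc_last, Fin.init_snoc]
  · -- values
    intro n hn
    simp only [A, Finset.mem_filter, Fintype.mem_piFinset, Finset.mem_Icc] at hn
    obtain ⟨hmem, hmono⟩ := hn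
    rw [Fin.prod_univ_castSucc]
    have hlast : (if (Fin.last r).1 = (r+1) - 1 then ε else 1) ^ n (Fin.last r)
        / (n (Fin.last r) : ℂ) = ε ^ n (Fin.last r) / (n (Fin.last r) : ℂ) := by
      simp [Fin.last]
    have hinit : ∀ i : Fin r, (if (i.castSucc).1 = (r+1) - 1 then ε else 1) ^ n i.castSucc
        / (n i.castSucc : ℂ) = ((n i.castSucc : ℂ))⁻¹ := by
      intro i
      have : (i.castSucc).1 ≠ (r+1) - 1 := by
        simp only [Fin.coe_castSucc, Nat.add_sub_cancel]
        exact Nat.ne_of_lt i.isLt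
      rw [if_neg this, one_pow, one_div]
    rw [hlast, Finset.prod_congr rfl (fun i _ => hinit i)]
    rw [mul_comm]
    rfl


lemma uz_zero (ε : ℂ) (N : ℕ) : unitZetaPartial ε 0 N = 1 := by
  rw [uz_eq]
  have h1 : A 0 N = Finset.univ := by
    apply Finset.eq_univ_iff_forall.mpr
    intro n
    simp only [A, Finset.mem_filter, Fintype.mem_piFinset]
    exact ⟨fun i => i.elim0, fun i => i.elim0⟩
  rw [h1, Finset.univ_unique, Finset.sum_singleton]
  simp

lemma uz_one_eq_B (r N : ℕ) : unitZetaPartial 1 r N = ((B r N : ℝ) : ℂ) := by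
  induction r generalizing N with
  | zero => rw [uz_zero]; simp [B]
  | succ r ih =>
      rw [peel, B]
      push_cast
      apply Finset.sum_congr rfl
      intro m hm
      rw [ih, one_pow]
      ring

lemma main_form (ε : ℂ) (r M : ℕ) :
    unitZetaPartial ε (r+1) M
      = ∑ m ∈ Finset.Icc 1 M, ((c (r+1) m : ℝ) : ℂ) * ε^m := by
  rw [peel]
  apply Finset.sum_congr rfl
  intro m hm
  rw [Finset.mem_Icc] at hm
  rw [uz_one_eq_B]
  have hc : c (r+1) m = B r (m-1) / m := by
    have hm0 : m ≠ 0 := by omega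
    simp [c, hm0]
  rw [hc]
  have hm0 : (m : ℂ) ≠ 0 := by
    exact_mod_cast (by omega : m ≠ 0)
  push_cast
  field_simp

lemma main_form' (ε : ℂ) (r M : ℕ) :
    unitZetaPartial ε (r+1) M
      = ∑ m ∈ Finset.range (M+1), ((c (r+1) m : ℝ) : ℂ) * ε^m := by
  rw [main_form]
  have h : Finset.range (M+1) = insert 0 (Finset.Icc 1 M) := by
    ext x; simp only [mem_range, mem_insert, mem_Icc]; omega
  rw [h, Finset.sum_insert (by simp)]
  simp [c]

section conv
variable {ε : ℂ}

lemma norm_one_sub_pos (hne : ε ≠ 1) : (0:ℝ) < ‖1 - ε‖ := by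
  rw [norm_pos_iff]
  intro h
  exact hne (sub_eq_zero.mp h).symm

lemma G_bound (hε : ‖ε‖ = 1) (hne : ε ≠ 1) (n : ℕ) : ‖∑ i ∈ Finset.range n, ε^i‖ ≤ 2/‖1-ε‖ := by
  rw [geom_sum_eq hne n]
  rw [norm_div]
  have h1 : ‖ε^n - 1‖ ≤ 2 := by
    calc ‖ε^n - 1‖ ≤ ‖ε^n‖ + ‖(1:ℂ)‖ := norm_sub_le _ _
      _ = 2 := by
          rw [norm_pow]
          rw [show ‖ε‖ = 1 from hε]
          norm_num
  have h2 : ‖ε - 1‖ = ‖1 - ε‖ := norm_sub_rev _ _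
  rw [h2]
  have := norm_one_sub_pos hne
  gcongr

lemma partial_tendsto (hε : ‖ε‖ = 1) (hne : ε ≠ 1) (r : ℕ) :
    ∃ l : ℂ, Tendsto (fun N => ∑ i ∈ Finset.range N, ((c (r+1) i : ℝ):ℂ) * ε^i)
      atTop (𝓝 l) := by
  set fC : ℕ → ℂ := fun i => ((c (r+1) i : ℝ):ℂ) with hfC
  set G : ℕ → ℂ := fun n => ∑ i ∈ Finset.range n, ε^i with hG
  set C : ℝ := 2/‖1-ε‖ with hC
  have hGb : ∀ n, ‖G n‖ ≤ C := fun n => G_bound hε hne n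
  have hparts : ∀ n, ∑ i ∈ Finset.range n, fC i * ε^i
      = fC (n-1) * G n - ∑ i ∈ Finset.range (n-1), (fC (i+1) - fC i) * G (i+1) := by
    intro n
    simpa [smul_eq_mul] using Finset.sum_range_by_parts fC (fun i => ε^i) n
  have hsum : Summable (fun i => (fC (i+1) - fC i) * G (i+1)) := by
    apply Summable.of_norm_bounded ((c_diff_summable r).mul_right C)
    intro i
    rw [norm_mul]
    have h1 : ‖fC (i+1) - fC i‖ = |c (r+1) (i+1) - c (r+1) i| := by
      rw [hfC]
      rw [← Complex.ofReal_sub, Complex.norm_real, Real.norm_eq_abs]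
    rw [h1]
    exact mul_le_mul_of_nonneg_left (hGb (i+1)) (abs_nonneg _)
  have h2 : Tendsto (fun n => ∑ i ∈ Finset.range (n-1), (fC (i+1) - fC i) * G (i+1))
      atTop (𝓝 (∑' i, (fC (i+1) - fC i) * G (i+1))) := by
    exact (hsum.hasSum.tendsto_sum_nat).comp (tendsto_sub_atTop_nat 1)
  have h1 : Tendsto (fun n => fC (n-1) * G n) atTop (𝓝 0) := by
    have hb : ∀ n, ‖fC (n-1) * G n‖ ≤ c (r+1) (n-1) * C := by
      intro n
      rw [norm_mul]
      have he : ‖fC (n-1)‖ = c (r+1) (n-1) := by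
        rw [hfC, Complex.norm_real, Real.norm_eq_abs, abs_of_nonneg (c_nonneg _ _)]
      rw [he]
      exact mul_le_mul_of_nonneg_left (hGb n) (c_nonneg _ _)
    have hg0 : Tendsto (fun n : ℕ => c (r+1) (n-1) * C) atTop (𝓝 0) := by
      have := ((c_tendsto_zero r).comp (tendsto_sub_atTop_nat 1)).mul_const C
      simpa using this
    exact squeeze_zero_norm hb hg0
  refine ⟨0 - ∑' i, (fC (i+1) - fC i) * G (i+1), ?_⟩
  have := h1.sub h2
  apply this.congr
  intro n
  exact (hparts n).symm

lemma re_lt_one (hε : ‖ε‖ = 1) (hne : ε ≠ 1) : ε.re < 1 := by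
  have hle : ε.re ≤ 1 := by
    have := Complex.re_le_norm ε
    rwa [hε] at this
  rcases lt_or_eq_of_le hle with h | h
  · exact h
  exfalso
  apply hne
  have h2 : ε.re^2 + ε.im^2 = 1 := by
    have h3 := Complex.sq_norm ε
    rw [hε, Complex.normSq_apply] at h3
    nlinarith [h3]
  have him : ε.im = 0 := by nlinarith
  apply Complex.ext
  · simp [h]
  · simp [him]

lemma limit_id (hε : ‖ε‖ = 1) (hne : ε ≠ 1) (r : ℕ) (l : ℂ)
    (hl : Tendsto (fun N => ∑ i ∈ Finset.range N, ((c (r+1) i : ℝ):ℂ) * ε^i)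
      atTop (𝓝 l)) :
    l = (-Complex.log (1-ε))^(r+1) / (r+1).factorial := by
  set fC : ℕ → ℂ := fun i => ((c (r+1) i : ℝ):ℂ) * ε^i with hfC
  have habel := Complex.tendsto_tsum_powerSeries_nhdsWithin_lt (f := fC) hl
  set F := (𝓝[<] (1:ℝ)).map Complex.ofReal with hF
  have hne_bot : F.NeBot := Filter.map_neBot
  set target : ℂ := (-Complex.log (1-ε))^(r+1) / (r+1).factorial with htarget
  have h2 : Tendsto (fun z : ℂ => ∑' n, fC n * z^n) F (𝓝 target) := by
    have heq : ∀ᶠ z in F, ∑' n, fC n * z^n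
        = (-Complex.log (1 - z*ε))^(r+1) / (r+1).factorial := by
      rw [hF, Filter.eventually_map]
      have hmem : Set.Ioo (-1:ℝ) 1 ∈ 𝓝[<] (1:ℝ) :=
        Ioo_mem_nhdsLT_of_mem (by constructor <;> norm_num)
      filter_upwards [hmem] with t ht
      have hz : ‖(t:ℂ)*ε‖ < 1 := by
        rw [norm_mul, Complex.norm_real, show ‖ε‖ = 1 from hε, mul_one,
          Real.norm_eq_abs, abs_lt]
        exact ⟨ht.1, ht.2⟩
      have hs := hasSum_c r hz
      have he : ∀ n : ℕ, (c (r+1) n : ℂ) * ((t:ℂ)*ε)^n = fC n * (t:ℂ)^n := by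
        intro n
        rw [hfC, mul_pow]
        ring
      rw [funext he] at hs
      exact hs.tsum_eq
    have hcont : Tendsto (fun z : ℂ => (-Complex.log (1 - z*ε))^(r+1) / (r+1).factorial)
        F (𝓝 target) := by
      have t0 : Tendsto Complex.ofReal (𝓝[<] (1:ℝ)) (𝓝 (1:ℂ)) := by
        have : Tendsto Complex.ofReal (𝓝 (1:ℝ)) (𝓝 (1:ℂ)) := by
          exact Complex.continuous_ofReal.continuousAt
        exact this.mono_left nhdsWithin_le_nhds
      have t1 : Tendsto (fun z : ℂ => z*ε) F (𝓝 ε) := by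
        rw [hF]
        have hmul : Tendsto (fun z : ℂ => z*ε) (𝓝 (1:ℂ)) (𝓝 ((1:ℂ)*ε)) :=
          (continuous_mul_right ε).continuousAt
        rw [one_mul] at hmul
        exact hmul.comp (Filter.tendsto_map' t0)
      have t2 : Tendsto (fun z : ℂ => 1 - z*ε) F (𝓝 (1-ε)) := by
        simpa using (tendsto_const_nhds (x := (1:ℂ))).sub t1
      have hslit : (1-ε) ∈ Complex.slitPlane := by
        left
        simp only [Complex.sub_re, Complex.one_re]
        linarith [re_lt_one hε hne]
      have t3 : Tendsto (fun z : ℂ => Complex.log (1 - z*ε)) F (𝓝 (Complex.log (1-ε))) :=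
        (continuousAt_clog hslit).tendsto.comp t2
      have t4 := ((t3.neg).pow (r+1)).div_const ((r+1).factorial : ℂ)
      exact t4
    exact hcont.congr' (by filter_upwards [heq] with z hz using hz.symm)
  exact tendsto_nhds_unique habel h2

end conv
end UnitZetaAux

open UnitZetaAux in
/-- For `ε` on the unit circle with `ε ≠ 1` and `r ≥ 1`, the unit cyclotomic multiple
zeta value `ζ(1,…,1; 1,…,1,ε)` of weight and depth `r` equals
`((-1)^r / r!) · (log(1-ε))^r`, where `log` is the principal branch of the logarithm. -/
theorem unitZeta_eq_pow_log (ε : ℂ) (habs : ‖ε‖ = 1) (hne : ε ≠ 1)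
    (r : ℕ) (hr : 1 ≤ r) :
    Tendsto (unitZetaPartial ε r) atTop
      (𝓝 ((-1) ^ r / (r.factorial : ℂ) * Complex.log (1 - ε) ^ r)) := by
  obtain ⟨s, rfl⟩ : ∃ s, r = s + 1 := ⟨r-1, by omega⟩
  obtain ⟨l, hl⟩ := partial_tendsto habs hne s
  have hlid := limit_id habs hne s l hl
  have h2 : Tendsto (fun M => ∑ i ∈ Finset.range (M+1), ((c (s+1) i : ℝ):ℂ) * ε^i)
      atTop (𝓝 l) := hl.comp (tendsto_add_atTop_nat 1)
  have h3 : Tendsto (unitZetaPartial ε (s+1)) atTop (𝓝 l) := by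
    apply h2.congr
    intro M
    exact (main_form' ε s M).symm
  have h4 : l = (-1) ^ (s+1) / ((s+1).factorial : ℂ) * Complex.log (1 - ε) ^ (s+1) := by
    rw [hlid, neg_pow]
    ring
  rwa [h4] at h3
end

section
/- (Closed formula for the depth-one Ihara action, used in the proof of Lemma 3.2.) For any η, i₁,…,i_s ∈ μ_N (s ≥ 1), in the free algebra A the Ihara action satisfies e_η ∘ (e_{i₁} e_{i₂} ⋯ e_{i_s}) = ∑_{j=1}^{s} e_{i₁} ⋯ e_{i_{j−1}} (e_{η·i_j} e_{i_j} − e_{i_j} e_{η·i_j}) e_{i_{j+1}} ⋯ e_{i_s} + e_{i₁} e_{i₂} ⋯ e_{i_s} e_η. -/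
/-- An `N`-th root of unity in `ℂ`. -/
def RootOfUnity (N : ℕ) : Type := {z : ℂ // z ^ N = 1}

/-- The product of two `N`-th roots of unity. -/
def RootOfUnity.mul {N : ℕ} (ε α : RootOfUnity N) : RootOfUnity N :=
  ⟨ε.1 * α.1, by rw [mul_pow, ε.2, α.2, mul_one]⟩

/-- The generator alphabet: `none` stands for `e₀` and `some α` for `e_α`, `α ∈ μ_N`. -/
def Alphabet (N : ℕ) : Type := Option (RootOfUnity N)

/-- The free noncommutative `ℚ`-algebra `A` on the generators `e₀, (e_α)_{α ∈ μ_N}`. -/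
def FreeAlg (N : ℕ) : Type := MonoidAlgebra ℚ (FreeMonoid (Alphabet N))

noncomputable instance (N : ℕ) : Ring (FreeAlg N) :=
  inferInstanceAs (Ring (MonoidAlgebra ℚ (FreeMonoid (Alphabet N))))

noncomputable instance (N : ℕ) : Algebra ℚ (FreeAlg N) :=
  inferInstanceAs (Algebra ℚ (MonoidAlgebra ℚ (FreeMonoid (Alphabet N))))

/-- The word `u₁u₂⋯u_n` as an element of `A`. -/
noncomputable def word {N : ℕ} (l : List (Alphabet N)) : FreeAlg N :=
  MonoidAlgebra.of ℚ (FreeMonoid (Alphabet N)) (FreeMonoid.ofList l)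

/-- A single generator as an element of `A`. -/
noncomputable def gen {N : ℕ} (g : Alphabet N) : FreeAlg N := word [g]


lemma word_append {N : ℕ} (a b : List (Alphabet N)) :
    word (a ++ b) = word a * word b := by
  unfold word
  rw [show FreeMonoid.ofList (a ++ b) = FreeMonoid.ofList a * FreeMonoid.ofList b from rfl,
    map_mul]
  rfl

lemma word_nil {N : ℕ} : word ([] : List (Alphabet N)) = 1 := rfl

lemma word_cons {N : ℕ} (a : Alphabet N) (w : List (Alphabet N)) :
    word (a :: w) = gen a * word w := by
  rw [show a :: w = [a] ++ w from rfl, word_append]; rfl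

set_option maxHeartbeats 1600000 in
/-- Closed formula for the depth-one Ihara action: for any `ℚ`-bilinear map `∘` on `A`
satisfying the defining recursion of the Ihara action (with respect to the twisting algebra
maps `[ε]` and the antipode-like linear map `∗`), one has
`e_η ∘ (e_{i₁}⋯e_{i_s}) = ∑_j e_{i₁}⋯e_{i_{j-1}}(e_{ηi_j}e_{i_j} - e_{i_j}e_{ηi_j})e_{i_{j+1}}⋯e_{i_s}
  + e_{i₁}⋯e_{i_s}e_η`. -/
theorem ihara_action_depth_one (N : ℕ) (hN : 1 ≤ N)
    (circ : FreeAlg N →ₗ[ℚ] FreeAlg N →ₗ[ℚ] FreeAlg N)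
    (bracket : RootOfUnity N → FreeAlg N →ₐ[ℚ] FreeAlg N)
    (hbr0 : ∀ ε : RootOfUnity N, bracket ε (gen none) = gen none)
    (hbr : ∀ ε α : RootOfUnity N, bracket ε (gen (some α)) = gen (some (ε.mul α)))
    (star : FreeAlg N →ₗ[ℚ] FreeAlg N)
    (hstar : ∀ l : List (Alphabet N),
      star (word l) = ((-1 : ℚ) ^ l.length) • word l.reverse)
    (hcirc0 : ∀ (a : FreeAlg N) (n : ℕ),
      circ a (gen none ^ n) = gen none ^ n * a)
    (hcirc : ∀ (a : FreeAlg N) (n : ℕ) (ε : RootOfUnity N) (w : List (Alphabet N)),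
      circ a (gen none ^ n * gen (some ε) * word w) =
        gen none ^ n *
            (bracket ε a * gen (some ε) + gen (some ε) * star (bracket ε a)) * word w +
          gen none ^ n * gen (some ε) * circ a (word w))
    (η : RootOfUnity N) (l : List (RootOfUnity N)) (hl : l ≠ []) :
    circ (gen (some η)) (word (l.map some)) =
      (∑ j : Fin l.length,
        word ((l.take j).map some) *
          (gen (some (η.mul (l.get j))) * gen (some (l.get j)) -
            gen (some (l.get j)) * gen (some (η.mul (l.get j)))) *
          word ((l.drop (j + 1)).map some)) +
        word (l.map some) * gen (some η) := by
  have circ_one : circ (gen (some η)) 1 = gen (some η) := by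
    have := hcirc0 (gen (some η)) 0
    simpa using this
  have key : ∀ (ε : RootOfUnity N) (w : List (Alphabet N)),
      circ (gen (some η)) (gen (some ε) * word w) =
        (gen (some (η.mul ε)) * gen (some ε) -
          gen (some ε) * gen (some (η.mul ε))) * word w +
          gen (some ε) * circ (gen (some η)) (word w) := by
    intro ε w
    have h := hcirc (gen (some η)) 0 ε w
    rw [pow_zero, one_mul, one_mul, hbr] at h
    have hs : star (gen (some (ε.mul η))) = - gen (some (ε.mul η)) := by
      have := hstar [some (ε.mul η)]
      have h1 : ([some (ε.mul η)] : List (Alphabet N)).length = 1 := rfl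
      have h2 : ([some (ε.mul η)] : List (Alphabet N)).reverse = [some (ε.mul η)] := rfl
      rw [h1, h2, pow_one, neg_one_smul] at this
      exact this
    have hcomm : ε.mul η = η.mul ε := Subtype.ext (mul_comm _ _)
    rw [hs, hcomm] at h
    rw [h, mul_neg, ← sub_eq_add_neg]
  obtain ⟨ε, t, rfl⟩ : ∃ ε t, l = ε :: t := by
    cases l with
    | nil => exact absurd rfl hl
    | cons a b => exact ⟨a, b, rfl⟩
  clear hl
  have hm : ∀ (x : RootOfUnity N) (t : List (RootOfUnity N)),
      word ((x :: t).map some) = gen (some x) * word (t.map some) := fun x t => word_cons _ _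
  have hm0 : word (([] : List (RootOfUnity N)).map some) = 1 := rfl
  induction t generalizing ε with
  | nil =>
    rw [hm, key, hm0, circ_one]
    simp [word_cons, word_nil, hm, hm0]
  | cons b t ih =>
    rw [hm, key, ih b]
    simp only [List.length_cons, Fin.sum_univ_succ, Fin.val_zero, List.take_zero,
      List.map_nil, word_nil, one_mul, List.get_cons_succ, Fin.val_succ,
      List.take_succ_cons, List.drop_succ_cons, List.map_cons, word_cons,
      List.get_cons_zero, List.drop_zero, Nat.zero_add, List.get_eq_getElem,
      List.getElem_cons_succ, List.getElem_cons_zero, mul_add, Finset.mul_sum, mul_one, hm, hm0]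
    simp only [word_cons, mul_assoc, hm, hm0]
    abel
end

section
/- (Vanishing part of Lemma 3.2.) Let m ≥ 1, ε ∈ μ_N, and set σ = (ad e_0)^m (e_ε) ∈ A, where ad e_0 (x) = e_0·x − x·e_0. Then for all i₁,…,i_s ∈ μ_N (s ≥ 0), when σ ∘ (e_{i₁} e_{i₂} ⋯ e_{i_s}) is written in the basis of words in the generators e_0, (e_α)_{α∈μ_N}, the coefficient of every word that contains no occurrence of e_0 is zero. -/
/-- `A` viewed as the monoid algebra on the free monoid of words. -/
def FreeAlg.toMA {N : ℕ} (x : FreeAlg N) : MonoidAlgebra ℚ (FreeMonoid (Alphabet N)) := x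

/-- The coefficient of the word `m` in `x ∈ A` (words form a `ℚ`-basis of `A`). -/
noncomputable def coeffOf {N : ℕ} (x : FreeAlg N) (m : FreeMonoid (Alphabet N)) : ℚ :=
  x.toMA.coeff m

namespace IharaAux
open FreeMonoid
variable {N : ℕ}

/-- "supported on words containing `e₀`" -/
def S (x : FreeAlg N) : Prop :=
  ∀ l : List (Alphabet N), none ∉ l → (FreeAlg.toMA x).coeff (FreeMonoid.ofList l) = 0

lemma word_eq_single (w : List (Alphabet N)) :
    (FreeAlg.toMA (word w)) = MonoidAlgebra.single (FreeMonoid.ofList w) (1 : ℚ) := rfl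

lemma word_nil : (word ([] : List (Alphabet N))) = 1 := rfl

lemma word_cons (g : Alphabet N) (w : List (Alphabet N)) :
    word (g :: w) = gen g * word w :=
  map_mul (MonoidAlgebra.of ℚ (FreeMonoid (Alphabet N))) (ofList [g]) (ofList w)

lemma S_add {x y : FreeAlg N} (hx : S x) (hy : S y) : S (x + y) := by
  intro l hl
  show (FreeAlg.toMA x + FreeAlg.toMA y).coeff (FreeMonoid.ofList l) = 0
  rw [MonoidAlgebra.coeff_add, Finsupp.add_apply, hx l hl, hy l hl, add_zero]

lemma S_sub {x y : FreeAlg N} (hx : S x) (hy : S y) : S (x - y) := by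
  intro l hl
  show (FreeAlg.toMA x - FreeAlg.toMA y).coeff (FreeMonoid.ofList l) = 0
  rw [MonoidAlgebra.coeff_sub, Finsupp.sub_apply, hx l hl, hy l hl, sub_zero]

lemma S_mul_right {x : FreeAlg N} (hx : S x) (y : FreeAlg N) : S (x * y) := by
  intro l hl
  classical
  show ((FreeAlg.toMA x) * (FreeAlg.toMA y)).coeff (FreeMonoid.ofList l) = 0
  rw [MonoidAlgebra.coeff_mul]
  refine Finset.sum_eq_zero fun a₁ _ => Finset.sum_eq_zero fun a₂ _ => ?_
  beta_reduce
  split_ifs with h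
  · have h2 : toList a₁ ++ toList a₂ = l := by
      rw [← toList_mul, h, toList_ofList]
    have : none ∉ toList a₁ := fun hmem => hl (h2 ▸ List.mem_append_left _ hmem)
    have := hx (toList a₁) this
    rw [ofList_toList] at this
    rw [this, zero_mul]
  · rfl

lemma S_mul_left {x : FreeAlg N} (hx : S x) (y : FreeAlg N) : S (y * x) := by
  intro l hl
  classical
  show ((FreeAlg.toMA y) * (FreeAlg.toMA x)).coeff (FreeMonoid.ofList l) = 0
  rw [MonoidAlgebra.coeff_mul]
  refine Finset.sum_eq_zero fun a₁ _ => Finset.sum_eq_zero fun a₂ _ => ?_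
  beta_reduce
  split_ifs with h
  · have h2 : toList a₁ ++ toList a₂ = l := by
      rw [← toList_mul, h, toList_ofList]
    have : none ∉ toList a₂ := fun hmem => hl (h2 ▸ List.mem_append_right _ hmem)
    have := hx (toList a₂) this
    rw [ofList_toList] at this
    rw [this, mul_zero]
  · rfl

lemma S_gen_none : S (gen (none : Alphabet N)) := by
  classical
  intro l hl
  show (MonoidAlgebra.single (ofList [(none : Alphabet N)]) (1 : ℚ)).coeff (ofList l) = 0
  rw [MonoidAlgebra.coeff_single, Finsupp.single_apply, if_neg]
  intro h
  have : [(none : Alphabet N)] = l := by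
    have := congrArg toList h
    exact (toList_ofList _).symm.trans (this.trans (toList_ofList _))
  exact hl (this ▸ List.mem_singleton_self _)

lemma S_ad (z : FreeAlg N) : S (gen none * z - z * gen none) :=
  S_sub (S_mul_right S_gen_none z) (S_mul_left S_gen_none z)

lemma star_coeff (star : FreeAlg N →ₗ[ℚ] FreeAlg N)
    (hstar : ∀ l : List (Alphabet N),
      star (word l) = ((-1 : ℚ) ^ l.length) • word l.reverse)
    (x : FreeAlg N) (l : List (Alphabet N)) :
    (FreeAlg.toMA (star x)).coeff (ofList l)
      = ((-1 : ℚ) ^ l.length) * (FreeAlg.toMA x).coeff (ofList l.reverse) := by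
  classical
  induction x using MonoidAlgebra.induction_linear with
  | zero =>
    change (FreeAlg.toMA (star (0 : FreeAlg N))).coeff _ = _
    rw [map_zero]
    show (0 : MonoidAlgebra ℚ (FreeMonoid (Alphabet N))).coeff (ofList l) = _ * (0 : MonoidAlgebra ℚ (FreeMonoid (Alphabet N))).coeff (ofList l.reverse)
    simp
  | add f g hf hg =>
    refine (congrArg (fun x => (FreeAlg.toMA x).coeff (ofList l)) (map_add star f g)).trans ?_
    show (FreeAlg.toMA (star f) + FreeAlg.toMA (star g)).coeff (ofList l)
        = _ * ((FreeAlg.toMA f + FreeAlg.toMA g).coeff (ofList l.reverse))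
    rw [MonoidAlgebra.coeff_add, MonoidAlgebra.coeff_add, Finsupp.add_apply, Finsupp.add_apply, hf, hg, mul_add]
  | single a b =>
    have h1 : (MonoidAlgebra.single a b : MonoidAlgebra ℚ (FreeMonoid (Alphabet N))) = b • word (toList a) := by
      show MonoidAlgebra.single a b = b • MonoidAlgebra.single (ofList (toList a)) (1 : ℚ)
      rw [ofList_toList, MonoidAlgebra.smul_single', mul_one]
    rw [h1, map_smul, hstar]
    show (b • (((-1 : ℚ) ^ (toList a).length) • FreeAlg.toMA (word (toList a).reverse))).coeff (ofList l)
        = _ * ((b • FreeAlg.toMA (word (toList a))).coeff (ofList l.reverse))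
    rw [word_eq_single, word_eq_single, ofList_toList, MonoidAlgebra.coeff_smul_apply, MonoidAlgebra.coeff_smul_apply,
      MonoidAlgebra.coeff_smul_apply, MonoidAlgebra.coeff_single, MonoidAlgebra.coeff_single, Finsupp.single_apply, Finsupp.single_apply]
    by_cases h : (toList a).reverse = l
    · subst h
      rw [if_pos rfl, if_pos (by rw [List.reverse_reverse, ofList_toList])]
      simp [List.length_reverse]
      ring
    · rw [if_neg, if_neg]
      · simp
      · intro hh
        apply h
        have := congrArg toList hh
        rw [toList_ofList] at this
        rw [this, List.reverse_reverse]
      · intro hh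
        apply h
        have := congrArg toList hh
        rwa [toList_ofList, toList_ofList] at this

lemma S_star {x : FreeAlg N} (star : FreeAlg N →ₗ[ℚ] FreeAlg N)
    (hstar : ∀ l : List (Alphabet N),
      star (word l) = ((-1 : ℚ) ^ l.length) • word l.reverse)
    (hx : S x) : S (star x) := by
  intro l hl
  rw [star_coeff star hstar, hx l.reverse (fun h => hl (List.mem_reverse.mp h)), mul_zero]

end IharaAux

/-- Vanishing part of Lemma 3.2: with `σ = (ad e₀)^m (e_ε)`, `m ≥ 1`, every word containing
no occurrence of `e₀` has zero coefficient in `σ ∘ (e_{i₁}⋯e_{i_s})`, where `∘` is any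
`ℚ`-bilinear map satisfying the defining recursion of the Ihara action. -/
theorem ihara_action_ad_vanishing (N : ℕ) (hN : 1 ≤ N)
    (circ : FreeAlg N →ₗ[ℚ] FreeAlg N →ₗ[ℚ] FreeAlg N)
    (bracket : RootOfUnity N → FreeAlg N →ₐ[ℚ] FreeAlg N)
    (hbr0 : ∀ ε : RootOfUnity N, bracket ε (gen none) = gen none)
    (hbr : ∀ ε α : RootOfUnity N, bracket ε (gen (some α)) = gen (some (ε.mul α)))
    (star : FreeAlg N →ₗ[ℚ] FreeAlg N)
    (hstar : ∀ l : List (Alphabet N),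
      star (word l) = ((-1 : ℚ) ^ l.length) • word l.reverse)
    (hcirc0 : ∀ (a : FreeAlg N) (n : ℕ),
      circ a (gen none ^ n) = gen none ^ n * a)
    (hcirc : ∀ (a : FreeAlg N) (n : ℕ) (ε : RootOfUnity N) (w : List (Alphabet N)),
      circ a (gen none ^ n * gen (some ε) * word w) =
        gen none ^ n *
            (bracket ε a * gen (some ε) + gen (some ε) * star (bracket ε a)) * word w +
          gen none ^ n * gen (some ε) * circ a (word w))
    (m : ℕ) (hm : 1 ≤ m) (ε : RootOfUnity N)
    (σ : FreeAlg N)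
    (hσ : σ = (fun y => gen none * y - y * gen none)^[m] (gen (some ε)))
    (i : List (RootOfUnity N)) (l : List (Alphabet N)) (hl : none ∉ l) :
    coeffOf (circ σ (word (i.map some))) (FreeMonoid.ofList l) = 0 := by
  classical
  obtain ⟨k, rfl⟩ : ∃ k, m = k + 1 := ⟨m - 1, (Nat.succ_pred_eq_of_pos hm).symm⟩
  have hSσ : IharaAux.S σ := by
    rw [hσ, Function.iterate_succ_apply']
    exact IharaAux.S_ad _
  have hSbr : ∀ ε' : RootOfUnity N, IharaAux.S (bracket ε' σ) := by
    intro ε'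
    have hcomm : ∀ (j : ℕ) (a : FreeAlg N),
        bracket ε' ((fun y => gen none * y - y * gen none)^[j] a)
          = (fun y => gen none * y - y * gen none)^[j] (bracket ε' a) := by
      intro j
      induction j with
      | zero => intro a; rfl
      | succ n ih =>
        intro a
        rw [Function.iterate_succ_apply', Function.iterate_succ_apply', ← ih]
        simp only [map_sub, map_mul, hbr0]
    rw [hσ, hcomm, Function.iterate_succ_apply']
    exact IharaAux.S_ad _
  suffices h : IharaAux.S (circ σ (word (i.map some))) from h l hl
  clear hσ
  induction i with
  | nil =>
    have h0 := hcirc0 σ 0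
    rw [pow_zero, one_mul] at h0
    rw [show word (List.map some ([] : List (RootOfUnity N))) = 1 from IharaAux.word_nil, h0]
    exact hSσ
  | cons ε' rest ih =>
    have h := hcirc σ 0 ε' (rest.map some)
    simp only [pow_zero, one_mul] at h
    refine (congrArg (fun x => IharaAux.S (circ σ x)) (IharaAux.word_cons (some ε' : Alphabet N) (rest.map some))).mpr ?_
    refine (congrArg IharaAux.S h).mpr ?_
    refine IharaAux.S_add (IharaAux.S_mul_right (IharaAux.S_add ?_ ?_) _)
      (IharaAux.S_mul_left ih _)
    · exact IharaAux.S_mul_right (hSbr ε') _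
    · exact IharaAux.S_mul_left (IharaAux.S_star star hstar (hSbr ε')) _
end

section
/- For ε ∈ ℂ with |ε| = 1 and ε ≠ 1 and integers p, q ≥ 1, the unit values satisfy ζ(1,…,1; 1,…,1,ε) of weight p times ζ(1,…,1; 1,…,1,ε) of weight q equals binom(p+q, p) times ζ(1,…,1; 1,…,1,ε) of weight p+q; equivalently, ζ(1,…,1;1,…,1,ε) of weight r equals (1/r!)·(ζ(1;ε))^r for every r ≥ 1, where ζ(1;ε) = lim_{M→∞} ∑_{n=1}^M ε^n/n. -/
open Filter Topology

namespace UnitZetaAux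

open Finset

noncomputable def P : ℕ → ℕ → ℝ
  | 0, _ => 1
  | r+1, N => ∑ m ∈ Finset.Icc 1 N, P r (m-1) / m

noncomputable def D : ℕ → ℕ → ℝ
  | 0, 0 => 1
  | 0, _+1 => 0
  | _+1, 0 => 0
  | r+1, n+1 => P r n / (n+1)

lemma P_nonneg : ∀ r N, 0 ≤ P r N
  | 0, _ => by rw [P]; norm_num
  | r+1, N => by
      rw [P]
      exact Finset.sum_nonneg fun m _ => div_nonneg (P_nonneg r (m-1)) (by positivity)

lemma D_nonneg : ∀ r n, 0 ≤ D r n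
  | 0, 0 => by norm_num [D]
  | 0, n+1 => by norm_num [D]
  | r+1, 0 => by norm_num [D]
  | r+1, n+1 => by
      rw [D]
      exact div_nonneg (P_nonneg r n) (by positivity)

lemma D_zero (n : ℕ) : D 0 n = if n = 0 then 1 else 0 := by
  cases n <;> simp [D]

lemma D_zero0 (r : ℕ) : D (r+1) 0 = 0 := by simp [D]

lemma P_eq_sum_D (r N : ℕ) : P r N = ∑ n ∈ Finset.range (N+1), D r n := by
  have hsplit : ∀ f : ℕ → ℝ, ∑ n ∈ Finset.range (N+1), f n
      = f 0 + ∑ n ∈ Finset.Icc 1 N, f n := by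
    intro f
    rw [Finset.range_eq_Ico, ← Finset.sum_Ico_consecutive _ (Nat.zero_le 1) (by omega),
      ← Finset.Ico_add_one_right_eq_Icc]
    norm_num
  cases r with
  | zero =>
      rw [hsplit]
      simp [D_zero, P]
  | succ r =>
      rw [hsplit, P]
      have : ∀ m ∈ Finset.Icc 1 N, D (r+1) m = P r (m-1) / m := by
        intro m hm
        obtain ⟨n, rfl⟩ : ∃ n, m = n + 1 := ⟨m - 1, by simp at hm; omega⟩
        simp [D]
      rw [Finset.sum_congr rfl this]
      simp [D]

lemma mul_D (r n : ℕ) : (n : ℝ) * D (r+1) n = ∑ k ∈ Finset.range n, D r k := by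
  cases n with
  | zero => simp
  | succ m =>
      rw [show D (r+1) (m+1) = P r m / (m+1) from rfl, P_eq_sum_D]
      push_cast
      field_simp

lemma swap (a : ℕ → ℝ) (n : ℕ) :
    ∑ k ∈ Finset.range n, (∑ j ∈ Finset.range k, a j) / ((n - k : ℕ) : ℝ)
      = ∑ k ∈ Finset.range n, ∑ j ∈ Finset.range k, a j / ((k - j : ℕ) : ℝ) := by
  have h1 : ∀ g : ℕ → ℕ → ℝ, (∑ k ∈ Finset.range n, ∑ j ∈ Finset.range k, g j k)
      = ∑ j ∈ Finset.range n, ∑ k ∈ Finset.Ico (j+1) n, g j k := fun g => by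
    simp only [Finset.range_eq_Ico]; rw [← Finset.sum_Ico_Ico_comm']
  simp only [Finset.sum_div]
  rw [h1 (fun j k => a j / ((n - k : ℕ):ℝ)), h1 (fun j k => a j / ((k - j : ℕ):ℝ))]
  refine Finset.sum_congr rfl fun j hj => ?_
  have hj' : j < n := Finset.mem_range.mp hj
  rw [Finset.sum_Ico_eq_sum_range, Finset.sum_Ico_eq_sum_range]
  set m := n - (j+1) with hm
  rw [← Finset.sum_range_reflect (fun i => a j / (((j+1+i) - j : ℕ):ℝ)) m]
  refine Finset.sum_congr rfl fun i hi => ?_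
  have hi' : i < m := Finset.mem_range.mp hi
  have : n - (j+1+i) = (j+1+(m-1-i)) - j := by omega
  simp only [this]

lemma E : ∀ r n : ℕ, ∑ k ∈ Finset.range n, D r k / ((n - k : ℕ):ℝ) = (r+1) * D (r+1) n := by
  intro r
  induction r with
  | zero =>
      intro n
      cases n with
      | zero => simp [D_zero0]
      | succ m =>
          rw [Finset.sum_eq_single 0]
          · rw [D_zero]
            simp [D_zero, Finset.sum_ite_eq', D, P]
          · intro b _ hb; rw [D_zero]; simp [hb]
          · intro h; exact absurd (Finset.mem_range.mpr (Nat.succ_pos m)) h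
  | succ r IH =>
      intro n
      cases n with
      | zero => simp [D_zero0]
      | succ m =>
          set n := m + 1 with hn
          have hn0 : (n:ℝ) ≠ 0 := by positivity
          have key : ∀ k ∈ Finset.range n, D (r+1) k / ((n-k:ℕ):ℝ)
              = (n:ℝ)⁻¹ * (D (r+1) k + ((k:ℝ) * D (r+1) k) / ((n-k:ℕ):ℝ)) := by
            intro k hk
            have hk' : k < n := Finset.mem_range.mp hk
            have hcast : ((n-k:ℕ):ℝ) = (n:ℝ) - (k:ℝ) := by
              rw [Nat.cast_sub hk'.le]
            have hnk : (n:ℝ) - (k:ℝ) ≠ 0 := by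
              have : (k:ℝ) < (n:ℝ) := by exact_mod_cast hk'
              linarith
            rw [hcast]
            field_simp
            ring
          rw [Finset.sum_congr rfl key, ← Finset.mul_sum, Finset.sum_add_distrib]
          have e1 : ∑ k ∈ Finset.range n, D (r+1) k = (n:ℝ) * D (r+2) n := (mul_D _ _).symm
          have e2 : ∑ k ∈ Finset.range n, ((k:ℝ) * D (r+1) k) / ((n-k:ℕ):ℝ)
              = (r+1) * ((n:ℝ) * D (r+2) n) := by
            calc ∑ k ∈ Finset.range n, ((k:ℝ) * D (r+1) k) / ((n-k:ℕ):ℝ)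
                = ∑ k ∈ Finset.range n, (∑ j ∈ Finset.range k, D r j) / ((n-k:ℕ):ℝ) := by
                  refine Finset.sum_congr rfl fun k _ => ?_
                  rw [mul_D]
              _ = ∑ k ∈ Finset.range n, ∑ j ∈ Finset.range k, D r j / ((k - j : ℕ):ℝ) :=
                  swap _ _
              _ = ∑ k ∈ Finset.range n, (r+1) * D (r+1) k := by
                  refine Finset.sum_congr rfl fun k _ => ?_
                  rw [IH]
              _ = (r+1) * ((n:ℝ) * D (r+2) n) := by rw [← Finset.mul_sum, e1]
          rw [e1, e2]
          field_simp
          push_cast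
          ring

lemma strip (r M : ℕ) (F : (Fin (r+1) → ℕ) → ℂ) :
    ∑ n ∈ (Fintype.piFinset fun _ : Fin (r+1) => Finset.Icc 1 M).filter
        (fun n => ∀ i j : Fin (r+1), i < j → n i < n j), F n
    = ∑ p ∈ (Finset.Icc 1 M).sigma (fun m =>
        (Fintype.piFinset fun _ : Fin r => Finset.Icc 1 (m-1)).filter
          (fun n => ∀ i j : Fin r, i < j → n i < n j)),
        F (Fin.snoc p.2 p.1) := by
  refine Finset.sum_nbij' (fun n => ⟨n (Fin.last r), Fin.init n⟩)
    (fun p => Fin.snoc p.2 p.1) ?_ ?_ ?_ ?_ ?_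
  · rintro n hn
    rw [Finset.mem_filter, Fintype.mem_piFinset] at hn
    obtain ⟨hmem, hchain⟩ := hn
    simp only [Finset.mem_sigma, Finset.mem_filter, Fintype.mem_piFinset]
    refine ⟨hmem _, fun i => ?_, fun i j hij => ?_⟩
    · have h1 := hmem (Fin.castSucc i)
      have h2 := hchain (Fin.castSucc i) (Fin.last r) (Fin.castSucc_lt_last i)
      have h3 := hmem (Fin.last r)
      simp only [Finset.mem_Icc] at h1 h3 ⊢
      unfold Fin.init
      omega
    · exact hchain _ _ (Fin.castSucc_lt_castSucc_iff.mpr hij)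
  · rintro ⟨m, n⟩ hp
    simp only [Finset.mem_sigma, Finset.mem_filter, Fintype.mem_piFinset,
      Finset.mem_Icc] at hp
    obtain ⟨hm, hmem, hchain⟩ := hp
    rw [Finset.mem_filter, Fintype.mem_piFinset]
    constructor
    · intro i
      rcases Fin.eq_castSucc_or_eq_last i with ⟨k, rfl⟩ | rfl
      · have := hmem k
        simp only [Fin.snoc_castSucc, Finset.mem_Icc]
        omega
      · simp only [Fin.snoc_last, Finset.mem_Icc]
        omega
    · intro i j hij
      rcases Fin.eq_castSucc_or_eq_last j with ⟨l, rfl⟩ | rfl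
      · rcases Fin.eq_castSucc_or_eq_last i with ⟨k, rfl⟩ | rfl
        · simp only [Fin.snoc_castSucc]
          exact hchain _ _ (Fin.castSucc_lt_castSucc_iff.mp hij)
        · exact absurd hij (not_lt.mpr (Fin.castSucc_lt_last l).le)
      · rcases Fin.eq_castSucc_or_eq_last i with ⟨k, rfl⟩ | rfl
        · have := hmem k
          simp only [Fin.snoc_castSucc, Fin.snoc_last]
          omega
        · exact absurd hij (lt_irrefl _)
  · intro n _; exact Fin.snoc_init_self n
  · rintro ⟨m, n⟩ _
    simp only [Fin.snoc_last, Fin.init_snoc]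
  · intro n _
    rw [Fin.snoc_init_self]

lemma P_chain : ∀ r N : ℕ,
    ∑ n ∈ (Fintype.piFinset fun _ : Fin r => Finset.Icc 1 N).filter
        (fun n => ∀ i j : Fin r, i < j → n i < n j),
      ∏ i : Fin r, ((n i : ℂ))⁻¹ = ((P r N : ℝ) : ℂ) := by
  intro r
  induction r with
  | zero =>
      intro N
      rw [P]
      simp
  | succ r IH =>
      intro N
      rw [strip r N (fun n => ∏ i : Fin (r+1), ((n i : ℂ))⁻¹), Finset.sum_sigma]
      have hterm : ∀ (m : ℕ) (n : Fin r → ℕ),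
          (∏ i : Fin (r+1), (((Fin.snoc n m : Fin (r+1) → ℕ) i : ℂ))⁻¹)
          = (∏ i : Fin r, ((n i : ℂ))⁻¹) * ((m : ℂ))⁻¹ := by
        intro m n
        rw [Fin.prod_univ_castSucc]
        simp [Fin.snoc_castSucc, Fin.snoc_last]
      calc ∑ m ∈ Finset.Icc 1 N, ∑ n ∈ (Fintype.piFinset fun _ : Fin r =>
              Finset.Icc 1 (m-1)).filter (fun n => ∀ i j : Fin r, i < j → n i < n j),
            ∏ i : Fin (r+1), (((Fin.snoc n m : Fin (r+1) → ℕ) i : ℂ))⁻¹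
          = ∑ m ∈ Finset.Icc 1 N, ((P r (m-1) : ℝ) : ℂ) * ((m : ℂ))⁻¹ := by
            refine Finset.sum_congr rfl fun m _ => ?_
            rw [Finset.sum_congr rfl fun n _ => hterm m n, ← Finset.sum_mul, IH (m-1)]
        _ = ((P (r+1) N : ℝ) : ℂ) := by
            rw [P]
            push_cast
            refine (Finset.sum_congr rfl fun m _ => ?_).symm
            rw [div_eq_mul_inv]

lemma uZ_eq (ε : ℂ) (r M : ℕ) : unitZetaPartial ε (r+1) M
    = ∑ m ∈ Finset.Icc 1 M, ((P r (m-1) : ℝ) : ℂ) * (ε^m / m) := by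
  rw [unitZetaPartial, strip r M _, Finset.sum_sigma]
  refine Finset.sum_congr rfl fun m _ => ?_
  have hterm : ∀ n : Fin r → ℕ,
      (∏ i : Fin (r+1), (if (i : ℕ) = (r+1) - 1 then ε else 1)
          ^ ((Fin.snoc n m : Fin (r+1) → ℕ) i) / (((Fin.snoc n m : Fin (r+1) → ℕ) i : ℂ)))
      = (∏ i : Fin r, ((n i : ℂ))⁻¹) * (ε^m / m) := by
    intro n
    rw [Fin.prod_univ_castSucc]
    refine congrArg₂ (· * ·) (Finset.prod_congr rfl fun i _ => ?_) ?_
    · have h1 : (i : ℕ) ≠ r := i.isLt.ne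
      simp [Fin.snoc_castSucc, h1]
    · simp [Fin.snoc_last, Fin.val_last]
  rw [Finset.sum_congr rfl fun n _ => hterm n, ← Finset.sum_mul, P_chain]

lemma uZ_eq_D (ε : ℂ) (r M : ℕ) (hr : 1 ≤ r) :
    unitZetaPartial ε r M = ∑ n ∈ Finset.range (M+1), ((D r n : ℝ) : ℂ) * ε^n := by
  obtain ⟨r', rfl⟩ : ∃ r', r = r'+1 := ⟨r-1, by omega⟩
  rw [uZ_eq]
  rw [Finset.range_eq_Ico, ← Finset.sum_Ico_consecutive _ (Nat.zero_le 1) (by omega : 1 ≤ M+1),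
    ← Finset.Ico_add_one_right_eq_Icc]
  have h0 : ∑ n ∈ Finset.Ico 0 1, ((D (r'+1) n : ℝ) : ℂ) * ε^n = 0 := by
    simp [D]
  rw [h0, zero_add]
  refine (Finset.sum_congr rfl fun m hm => ?_).symm
  obtain ⟨k, rfl⟩ : ∃ k, m = k + 1 := ⟨m-1, by simp at hm; omega⟩
  show ((D (r'+1) (k+1) : ℝ) : ℂ) * ε^(k+1) = _
  rw [show D (r'+1) (k+1) = P r' k / (k+1) from rfl]
  push_cast
  have : ((k:ℂ)+1) ≠ 0 := by
    have : (0:ℝ) < (k:ℝ) + 1 := by positivity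
    exact_mod_cast (by exact_mod_cast this.ne' : ((k:ℝ)+1 : ℝ) ≠ 0)
  field_simp

lemma hasSum_D : ∀ r : ℕ, ∀ w : ℂ, ‖w‖ < 1 →
    HasSum (fun n => ((D r n : ℝ) : ℂ) * w^n)
      ((-Complex.log (1-w))^r / (r.factorial : ℂ)) := by
  intro r
  induction r with
  | zero =>
      intro w hw
      have h1 : (fun n => ((D 0 n : ℝ):ℂ) * w^n) = (fun n => if n = 0 then (1:ℂ) else 0) := by
        funext n
        rw [D_zero]
        by_cases h : n = 0 <;> simp [h]
      rw [h1]
      simpa using hasSum_ite_eq 0 (1:ℂ)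
  | succ r IH =>
      intro w hw
      set L := -Complex.log (1-w) with hL
      have hnw : ‖((‖w‖ : ℝ) : ℂ)‖ < 1 := by
        rwa [Complex.norm_real, Real.norm_of_nonneg (norm_nonneg w)]
      have hsum_re : Summable (fun n => D r n * ‖w‖^n) := by
        have := (IH _ hnw).summable
        have h2 : (fun n => ((D r n : ℝ):ℂ) * ((‖w‖:ℝ):ℂ)^n)
            = (fun n => ((D r n * ‖w‖^n : ℝ) : ℂ)) := by
          funext n; push_cast; ring
        rw [h2] at this
        exact Complex.summable_ofReal.mp this
      have hfn : Summable (fun n => ‖((D r n : ℝ):ℂ) * w^n‖) := by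
        refine hsum_re.congr fun n => ?_
        rw [norm_mul, norm_pow, Complex.norm_real, Real.norm_of_nonneg (D_nonneg r n)]
      have hf := IH w hw
      have hg : HasSum (fun n : ℕ => w^n / (n:ℂ)) L :=
        Complex.hasSum_taylorSeries_neg_log hw
      have hgn : Summable (fun n : ℕ => ‖w^n / (n:ℂ)‖) := by
        refine Summable.of_nonneg_of_le (fun n => norm_nonneg _) (fun n => ?_)
          (summable_geometric_of_lt_one (norm_nonneg w) hw)
        rw [norm_div, norm_pow]
        rcases Nat.eq_zero_or_pos n with rfl | hn
        · simp
        · have h1 : (1:ℝ) ≤ ‖(n:ℂ)‖ := by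
            rw [Complex.norm_natCast]; exact_mod_cast hn
          exact div_le_self (by positivity) h1
      have hcauchy := tsum_mul_tsum_eq_tsum_sum_antidiagonal_of_summable_norm hfn hgn
      have hhs : Summable (fun n => ∑ kl ∈ Finset.HasAntidiagonal.antidiagonal n,
          (((D r kl.1 : ℝ):ℂ) * w^kl.1) * (w^kl.2 / (kl.2:ℂ))) :=
        (summable_norm_sum_mul_antidiagonal_of_summable_norm hfn hgn).of_norm
      have hcoeff : ∀ n : ℕ, ∑ kl ∈ Finset.HasAntidiagonal.antidiagonal n,
          (((D r kl.1 : ℝ):ℂ) * w^kl.1) * (w^kl.2 / (kl.2:ℂ))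
          = ((r:ℂ)+1) * (((D (r+1) n : ℝ):ℂ) * w^n) := by
        intro n
        rw [Finset.Nat.sum_antidiagonal_eq_sum_range_succ_mk]
        rw [Finset.sum_range_succ]
        simp only [Nat.sub_self, pow_zero, Nat.cast_zero, div_zero, mul_zero, add_zero]
        have h3 : ∀ k ∈ Finset.range n, (((D r k : ℝ):ℂ) * w^k) * (w^(n-k) / ((n-k : ℕ):ℂ))
            = (((D r k : ℝ):ℂ) / ((n-k : ℕ):ℂ)) * w^n := by
          intro k hk
          have hk' : k < n := Finset.mem_range.mp hk
          have hpow : w^k * w^(n-k) = w^n := by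
            rw [← pow_add, Nat.add_sub_cancel' hk'.le]
          calc (((D r k : ℝ):ℂ) * w^k) * (w^(n-k) / ((n-k : ℕ):ℂ))
              = (((D r k : ℝ):ℂ) / ((n-k : ℕ):ℂ)) * (w^k * w^(n-k)) := by ring
            _ = (((D r k : ℝ):ℂ) / ((n-k : ℕ):ℂ)) * w^n := by rw [hpow]
        rw [Finset.sum_congr rfl h3, ← Finset.sum_mul]
        have h4 : ∑ k ∈ Finset.range n, (((D r k : ℝ):ℂ) / ((n-k : ℕ):ℂ))
            = ((r:ℂ)+1) * ((D (r+1) n : ℝ):ℂ) := by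
          have h5 := congrArg (fun x : ℝ => (x : ℂ)) (E r n)
          push_cast at h5 ⊢
          convert h5 using 2
        rw [h4]
        ring
      have hr1 : ((r:ℂ)+1) ≠ 0 := by
        exact_mod_cast (Nat.cast_add_one_ne_zero r : ((r:ℂ)+1) ≠ 0)
      have h6 : HasSum (fun n => ((r:ℂ)+1) * (((D (r+1) n : ℝ):ℂ) * w^n))
          (((-Complex.log (1-w))^r / (r.factorial : ℂ)) * L) := by
        have h9 := hhs.hasSum
        rw [← hcauchy, hf.tsum_eq, hg.tsum_eq] at h9
        simpa only [hcoeff] using h9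
      have h7 := h6.mul_left (((r:ℂ)+1)⁻¹)
      have h8 : (fun n => ((r:ℂ)+1)⁻¹ * (((r:ℂ)+1) * (((D (r+1) n : ℝ):ℂ) * w^n)))
          = (fun n => ((D (r+1) n : ℝ):ℂ) * w^n) := by
        funext n
        field_simp
      rw [h8] at h7
      convert h7 using 1
      · rfl
      rw [Nat.factorial_succ]
      push_cast
      rw [pow_succ]
      have hfac : ((r.factorial : ℂ)) ≠ 0 := by
        exact_mod_cast Nat.cast_ne_zero.mpr r.factorial_ne_zero
      field_simp
      rw [← hL]
      ring

lemma slit (ε : ℂ) (habs : ‖ε‖ = 1) (hne : ε ≠ 1) :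
    1 - ε ∈ Complex.slitPlane := by
  rw [Complex.mem_slitPlane_iff]
  by_cases him : ε.im = 0
  · left
    have hsq := Complex.sq_norm ε
    rw [habs, Complex.normSq_apply, him] at hsq
    have h3 : ε.re ≠ 1 := by
      intro h
      exact hne (Complex.ext (by simp [h]) (by simp [him]))
    have h4 : (ε.re - 1) * (ε.re + 1) = 0 := by nlinarith
    rcases mul_eq_zero.mp h4 with h | h
    · exact absurd (by linarith : ε.re = 1) h3
    · have : ε.re = -1 := by linarith
      simp only [Complex.sub_re, Complex.one_re, this]
      norm_num
  · right
    simpa using him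

lemma limit_eq (ε : ℂ) (habs : ‖ε‖ = 1) (hne : ε ≠ 1)
    (r : ℕ) (hr : 1 ≤ r) (zr : ℂ)
    (hzr : Tendsto (unitZetaPartial ε r) atTop (𝓝 zr)) :
    zr = (-Complex.log (1-ε))^r / (r.factorial : ℂ) := by
  set C := -Complex.log (1-ε) with hC
  set f : ℕ → ℂ := fun n => ((D r n : ℝ):ℂ) * ε^n with hf
  have hps : Tendsto (fun N => ∑ i ∈ Finset.range N, f i) atTop (𝓝 zr) := by
    rw [← tendsto_add_atTop_iff_nat 1]
    refine hzr.congr fun M => ?_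
    exact (uZ_eq_D ε r M hr)
  have habel := Complex.tendsto_tsum_powerSeries_nhdsWithin_lt hps
  set F := (𝓝[<] (1:ℝ)).map (Complex.ofReal) with hFdef
  have hFle : F ≤ 𝓝 (1:ℂ) := by
    rw [hFdef]
    calc (𝓝[<] (1:ℝ)).map Complex.ofReal ≤ (𝓝 (1:ℝ)).map Complex.ofReal :=
          map_mono nhdsWithin_le_nhds
      _ ≤ 𝓝 (1:ℂ) := by
          rw [← Complex.ofReal_one]
          exact Complex.continuous_ofReal.continuousAt.tendsto
  have hcont : Tendsto (fun z : ℂ => (-Complex.log (1 - ε*z))^r / (r.factorial : ℂ)) F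
      (𝓝 (C^r / (r.factorial : ℂ))) := by
    have h1 : Tendsto (fun z : ℂ => 1 - ε*z) F (𝓝 (1 - ε)) := by
      have : Tendsto (fun z : ℂ => 1 - ε*z) (𝓝 1) (𝓝 (1 - ε*1)) :=
        (continuous_const.sub (continuous_const.mul continuous_id)).continuousAt.tendsto
      rw [mul_one] at this
      exact this.mono_left hFle
    have h2 : ContinuousAt Complex.log (1 - ε) :=
      continuousAt_clog (slit ε habs hne)
    exact ((h2.tendsto.comp h1).neg.pow r).div_const _
  have heq : ∀ᶠ z in F, (∑' n, f n * z^n)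
      = (-Complex.log (1 - ε*z))^r / (r.factorial : ℂ) := by
    rw [hFdef, eventually_map]
    filter_upwards [Ioo_mem_nhdsLT_of_mem (Set.mem_Ioc.mpr ⟨zero_lt_one, le_refl 1⟩)]
      with x hx
    have hxn : ‖(x:ℂ)‖ < 1 := by
      rw [Complex.norm_real, Real.norm_eq_abs, abs_lt]
      constructor <;> [linarith [hx.1]; exact hx.2]
    have hwn : ‖ε * (x:ℂ)‖ < 1 := by
      rw [norm_mul]
      calc ‖ε‖ * ‖(x:ℂ)‖ = 1 * ‖(x:ℂ)‖ := by rw [show ‖ε‖ = 1 from habs]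
        _ = ‖(x:ℂ)‖ := one_mul _
        _ < 1 := hxn
    have hs := hasSum_D r (ε * (x:ℂ)) hwn
    have h3 : (fun n => ((D r n : ℝ):ℂ) * (ε * (x:ℂ))^n) = (fun n => f n * (x:ℂ)^n) := by
      funext n; rw [hf]; simp only [mul_pow]; ring
    rw [h3] at hs
    exact hs.tsum_eq
  have hne2 : F.NeBot := by
    rw [hFdef]
    exact Filter.map_neBot
  have h4 : Tendsto (fun z : ℂ => ∑' n, f n * z^n) F (𝓝 (C^r / (r.factorial : ℂ))) :=
    hcont.congr' (heq.mono fun z hz => hz.symm)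
  exact tendsto_nhds_unique habel h4

end UnitZetaAux

/-- For `ε` on the unit circle, `ε ≠ 1`: `ζ(1,…,1;1,…,1,ε)` of weight `p` times the one of
weight `q` equals `binom(p+q,p)` times the one of weight `p+q`; equivalently the weight-`r`
unit value equals `(1/r!)·ζ(1;ε)^r` for every `r ≥ 1`. -/
theorem unitZeta_mul (ε : ℂ) (habs : ‖ε‖ = 1) (hne : ε ≠ 1)
    (p q : ℕ) (hp : 1 ≤ p) (hq : 1 ≤ q) (zp zq zpq z₁ : ℂ)
    (hzp : Tendsto (unitZetaPartial ε p) atTop (𝓝 zp))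
    (hzq : Tendsto (unitZetaPartial ε q) atTop (𝓝 zq))
    (hzpq : Tendsto (unitZetaPartial ε (p + q)) atTop (𝓝 zpq))
    (hz₁ : Tendsto (fun M : ℕ => ∑ n ∈ Finset.Icc 1 M, ε ^ n / (n : ℂ)) atTop (𝓝 z₁)) :
    zp * zq = ((p + q).choose p : ℂ) * zpq ∧
    ∀ r : ℕ, 1 ≤ r → ∀ zr : ℂ, Tendsto (unitZetaPartial ε r) atTop (𝓝 zr) →
      zr = (1 / (r.factorial : ℂ)) * z₁ ^ r := by
  set C := -Complex.log (1-ε) with hC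
  have key : ∀ r : ℕ, 1 ≤ r → ∀ zr : ℂ, Tendsto (unitZetaPartial ε r) atTop (𝓝 zr) →
      zr = C^r / (r.factorial : ℂ) :=
    fun r hr zr h => UnitZetaAux.limit_eq ε habs hne r hr zr h
  have h1M : ∀ M, unitZetaPartial ε 1 M = ∑ n ∈ Finset.Icc 1 M, ε ^ n / (n : ℂ) := by
    intro M
    rw [UnitZetaAux.uZ_eq ε 0 M]
    refine Finset.sum_congr rfl fun m _ => ?_
    rw [UnitZetaAux.P]
    push_cast
    ring
  have hz1 : Tendsto (unitZetaPartial ε 1) atTop (𝓝 z₁) :=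
    hz₁.congr fun M => (h1M M).symm
  have hz1C : z₁ = C := by
    have := key 1 le_rfl z₁ hz1
    simpa using this
  have hp' := key p hp zp hzp
  have hq' := key q hq zq hzq
  have hpq' := key (p+q) (by omega) zpq hzpq
  have hfacp : ((p.factorial : ℂ)) ≠ 0 := Nat.cast_ne_zero.mpr p.factorial_ne_zero
  have hfacq : ((q.factorial : ℂ)) ≠ 0 := Nat.cast_ne_zero.mpr q.factorial_ne_zero
  have hfacpq : (((p+q).factorial : ℂ)) ≠ 0 := Nat.cast_ne_zero.mpr (p+q).factorial_ne_zero
  have hfacN : ((p+q).choose p : ℂ) * (q.factorial : ℂ) * (p.factorial : ℂ)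
      = ((p+q).factorial : ℂ) := by
    have h := Nat.add_choose_mul_factorial_mul_factorial q p
    rw [Nat.add_comm q p] at h
    exact_mod_cast congrArg (Nat.cast : ℕ → ℂ) h
  constructor
  · rw [hp', hq', hpq']
    rw [div_mul_div_comm, ← pow_add]
    rw [div_eq_iff (by exact mul_ne_zero hfacp hfacq)]
    rw [mul_comm (((p + q).choose p : ℂ)) _, mul_assoc, div_mul_eq_mul_div]
    rw [eq_div_iff hfacpq]
    calc C ^ (p+q) * ((p+q).factorial : ℂ)
        = C ^ (p+q) * (((p+q).choose p : ℂ) * (q.factorial : ℂ) * (p.factorial : ℂ)) := by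
          rw [hfacN]
      _ = C ^ (p + q) * (((p + q).choose p : ℂ) * ((q.factorial:ℂ) * (p.factorial:ℂ)))
          * 1 := by ring
      _ = C ^ (p + q) * (((p + q).choose p : ℂ) * ((p.factorial:ℂ) * (q.factorial:ℂ))) := by
          ring
  · intro r hr zr h
    rw [key r hr zr h, hz1C]
    rw [one_div, div_eq_mul_inv, mul_comm]
end
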